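/- arXiv:1205.3548 — 7 statements merged into one kernel-verified Lean document; each statement's English description precedes it below -/
import Mathlib

section
/- Let p ≥ 2 and n ≥ 1. The dimension (over ℝ) of the space of harmonic homogeneous polynomials of degree n in p variables is N(p,n) = C(n+p−2, n) + C(n+p−3, n−1), and this equals ((2n+p−2)/n)·C(n+p−3, n−1). -/
open MvPolynomial

/-- The formal Laplace operator `Δ_p = Σ_{i=1}^p ∂²/∂x_i²` on polynomials in `p`
variables, as a linear map. -/
noncomputable def mvLaplacian (p : ℕ) :
    MvPolynomial (Fin p) ℝ →ₗ[ℝ] MvPolynomial (Fin p) ℝ :=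
  ∑ i : Fin p, ((pderiv i).toLinearMap.comp (pderiv i).toLinearMap)

namespace Harmonic

variable {σ : Type*} [DecidableEq σ]

lemma degree_sub_single {d : σ →₀ ℕ} {i : σ} (h : 1 ≤ d i) :
    Finsupp.degree (d - Finsupp.single i 1) = Finsupp.degree d - 1 := by
  have hle : Finsupp.single i 1 ≤ d := by
    rwa [Finsupp.single_le_iff]
  have : (d - Finsupp.single i 1) + Finsupp.single i 1 = d := tsub_add_cancel_of_le hle
  have hdeg : Finsupp.degree (d - Finsupp.single i 1) + Finsupp.degree (Finsupp.single i 1)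
      = Finsupp.degree d := by
    rw [Finsupp.degree_eq_weight_one, ← map_add, this]
  have h1 : Finsupp.degree (Finsupp.single i 1) = 1 := by
    simp [Finsupp.degree_single]
  omega

lemma isHomogeneous_pderiv {φ : MvPolynomial σ ℝ} {n : ℕ}
    (h : φ.IsHomogeneous n) (i : σ) : (pderiv i φ).IsHomogeneous (n - 1) := by
  rw [← φ.support_sum_monomial_coeff, map_sum]
  apply IsHomogeneous.sum
  intro d hd
  rw [pderiv_monomial]
  rcases Nat.eq_zero_or_pos (d i) with h0 | h0
  · rw [h0]
    simp only [Nat.cast_zero, mul_zero, monomial_zero]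
    exact isHomogeneous_zero _ _ _
  · apply isHomogeneous_monomial
    have h2 : Finsupp.degree d = n := by
      rw [Finsupp.degree_eq_weight_one]; exact h (mem_support_iff.mp hd)
    rw [degree_sub_single h0, h2]

end Harmonic

namespace Harmonic

variable {σ : Type*} [DecidableEq σ] [Fintype σ]

lemma X_mul_pderiv_monomial {d : σ →₀ ℕ} {a : ℝ} (i : σ) :
    X i * pderiv i (monomial d a) = d i • monomial d a := by
  rw [pderiv_monomial]
  rcases Nat.eq_zero_or_pos (d i) with h0 | h0
  · rw [h0]; simp
  · have hle : Finsupp.single i 1 ≤ d := by rwa [Finsupp.single_le_iff]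
    rw [X, monomial_mul, one_mul, add_comm, tsub_add_cancel_of_le hle,
      smul_monomial]
    congr 1
    rw [nsmul_eq_mul, mul_comm]

lemma euler {φ : MvPolynomial σ ℝ} {n : ℕ} (h : φ.IsHomogeneous n) :
    ∑ i : σ, X i * pderiv i φ = n • φ := by
  conv_lhs => rw [← φ.support_sum_monomial_coeff]
  conv_rhs => rw [← φ.support_sum_monomial_coeff]
  simp only [map_sum, Finset.mul_sum]
  rw [Finset.sum_comm, Finset.smul_sum]
  apply Finset.sum_congr rfl
  intro d hd
  simp only [X_mul_pderiv_monomial]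
  rw [← Finset.sum_smul]
  congr 1
  have h2 : Finsupp.degree d = n := by
    rw [Finsupp.degree_eq_weight_one]; exact h (mem_support_iff.mp hd)
  rw [← h2, Finsupp.degree]
  refine (Finset.sum_subset (Finset.subset_univ d.support) ?_).symm
  intro x _ hx
  exact Finsupp.notMem_support_iff.mp hx

end Harmonic

namespace Harmonic

variable {σ : Type*} [DecidableEq σ] [Fintype σ]

lemma pderiv_eq_zero_of_isHomogeneous_zero {φ : MvPolynomial σ ℝ}
    (h : φ.IsHomogeneous 0) (i : σ) : pderiv i φ = 0 := by
  rw [← φ.support_sum_monomial_coeff, map_sum]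
  apply Finset.sum_eq_zero
  intro d hd
  have h2 : Finsupp.degree d = 0 := by
    rw [Finsupp.degree_eq_weight_one]; exact h (mem_support_iff.mp hd)
  have hd0 : d = 0 := (Finsupp.degree_eq_zero_iff d).mp h2
  subst hd0
  simp [pderiv_monomial]

variable {p : ℕ}

lemma lap_apply (φ : MvPolynomial (Fin p) ℝ) :
    mvLaplacian p φ = ∑ i : Fin p, pderiv i (pderiv i φ) := by
  simp [mvLaplacian, LinearMap.sum_apply]

lemma lap_isHomogeneous {φ : MvPolynomial (Fin p) ℝ} {n : ℕ} (h : φ.IsHomogeneous n) :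
    (mvLaplacian p φ).IsHomogeneous (n - 2) := by
  rw [lap_apply]
  apply IsHomogeneous.sum
  intro i _
  have := isHomogeneous_pderiv (isHomogeneous_pderiv h i) i
  rwa [Nat.sub_sub] at this

lemma lap_eq_zero_of_le_one {φ : MvPolynomial (Fin p) ℝ} {n : ℕ} (h : φ.IsHomogeneous n)
    (hn : n ≤ 1) : mvLaplacian p φ = 0 := by
  rw [lap_apply]
  apply Finset.sum_eq_zero
  intro i _
  have h1 : (pderiv i φ).IsHomogeneous 0 := by
    have := isHomogeneous_pderiv h i
    rwa [Nat.sub_eq_zero_of_le hn] at this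
  exact pderiv_eq_zero_of_isHomogeneous_zero h1 i

/-- `r² = ∑ xᵢ²`. -/
noncomputable def r2 (p : ℕ) : MvPolynomial (Fin p) ℝ := ∑ i : Fin p, X i ^ 2

lemma r2_isHomogeneous : (r2 p).IsHomogeneous 2 := by
  rw [r2]
  refine IsHomogeneous.sum _ _ _ ?_
  intro i _
  exact isHomogeneous_X_pow i 2

lemma pderiv_r2 (i : Fin p) : pderiv i (r2 p) = 2 * X i := by
  rw [r2, map_sum]
  rw [Finset.sum_eq_single i]
  · rw [pderiv_pow, pderiv_X_self]
    ring
  · intro j _ hj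
    rw [pderiv_pow, pderiv_X_of_ne hj]
    ring
  · intro h
    exact absurd (Finset.mem_univ i) h

lemma lap_r2_mul {h : MvPolynomial (Fin p) ℝ} {d : ℕ} (hh : h.IsHomogeneous d) :
    mvLaplacian p (r2 p * h) =
      ((2 * p + 4 * d : ℕ) : ℝ) • h + r2 p * mvLaplacian p h := by
  rw [lap_apply, lap_apply]
  have step : ∀ i : Fin p, pderiv i (pderiv i (r2 p * h)) =
      2 * h + 4 * (X i * pderiv i h) + r2 p * pderiv i (pderiv i h) := by
    intro i
    have hpd2 : pderiv i ((2 : MvPolynomial (Fin p) ℝ) * X i) = 2 := by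
      have h2 : (2 : MvPolynomial (Fin p) ℝ) = C 2 := (map_ofNat C 2).symm
      rw [h2, pderiv_C_mul, pderiv_X_self, mul_one]
    have e1 : pderiv i (r2 p * h) = 2 * X i * h + r2 p * pderiv i h := by
      rw [pderiv_mul, pderiv_r2]
    have e2 : pderiv i ((2 : MvPolynomial (Fin p) ℝ) * X i * h)
        = 2 * h + 2 * X i * pderiv i h := by
      rw [pderiv_mul, hpd2]
    have e3 : pderiv i (r2 p * pderiv i h)
        = 2 * X i * pderiv i h + r2 p * pderiv i (pderiv i h) := by
      rw [pderiv_mul, pderiv_r2]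
    rw [e1, map_add, e2, e3]
    ring
  simp only [step]
  rw [Finset.sum_add_distrib, Finset.sum_add_distrib, ← Finset.mul_sum, ← Finset.mul_sum,
    euler hh]
  rw [Finset.sum_const, Finset.card_univ, Fintype.card_fin, ← Finset.mul_sum]
  simp only [nsmul_eq_mul, smul_eq_C_mul, map_natCast]
  push_cast
  ring

end Harmonic

namespace Harmonic

variable {p : ℕ}

lemma lap_r2_pow_mul (j : ℕ) {h : MvPolynomial (Fin p) ℝ} {d : ℕ} (hh : h.IsHomogeneous d) :
    mvLaplacian p (r2 p ^ (j + 1) * h) =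
      ((2 * (j + 1) * (2 * d + 2 * j + p) : ℕ) : ℝ) • (r2 p ^ j * h)
        + r2 p ^ (j + 1) * mvLaplacian p h := by
  induction j with
  | zero =>
    rw [pow_one, pow_zero, one_mul, lap_r2_mul hh,
      show (2 * (0 + 1) * (2 * d + 2 * 0 + p) : ℕ) = 2 * p + 4 * d from by ring]
  | succ j ih =>
    have hh2 : (r2 p ^ (j + 1) * h).IsHomogeneous (2 * (j + 1) + d) := by
      exact ((r2_isHomogeneous (p := p)).pow (j + 1)).mul hh
    have e1 : r2 p ^ (j + 1 + 1) * h = r2 p * (r2 p ^ (j + 1) * h) := by ring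
    rw [e1, lap_r2_mul hh2, ih]
    simp only [smul_eq_C_mul, map_natCast]
    push_cast
    ring

end Harmonic

namespace Harmonic

variable {p : ℕ}

lemma pow_lap_succ (j : ℕ) (g : MvPolynomial (Fin p) ℝ) :
    (mvLaplacian p ^ (j + 1)) g = mvLaplacian p ((mvLaplacian p ^ j) g) := by
  rw [pow_succ', Module.End.mul_apply]

lemma pow_lap_isHomogeneous {g : MvPolynomial (Fin p) ℝ} {m : ℕ} (hg : g.IsHomogeneous m)
    (j : ℕ) : ((mvLaplacian p ^ j) g).IsHomogeneous (m - 2 * j) := by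
  induction j with
  | zero => simpa using hg
  | succ j ih =>
    rw [pow_lap_succ]
    have h2 := lap_isHomogeneous ih
    rwa [Nat.sub_sub, show 2 * j + 2 = 2 * (j + 1) from by ring] at h2

lemma pow_lap_eq_zero {g : MvPolynomial (Fin p) ℝ} {m : ℕ} (hg : g.IsHomogeneous m)
    {j : ℕ} (hj : m < 2 * j) : (mvLaplacian p ^ j) g = 0 := by
  induction j with
  | zero => omega
  | succ j ih =>
    rw [pow_lap_succ]
    by_cases h2 : m < 2 * j
    · rw [ih h2, map_zero]
    · exact lap_eq_zero_of_le_one (pow_lap_isHomogeneous hg j) (by omega)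

/-- coefficient -/
def bcoef (p m j : ℕ) : ℝ := ((2 * (j + 1) * (2 * (m - 2 * j) + 2 * j + p) : ℕ) : ℝ)

lemma bcoef_ne_zero (hp : 0 < p) (m j : ℕ) : bcoef p m j ≠ 0 := by
  rw [bcoef, Nat.cast_ne_zero]
  have : 0 < 2 * (j + 1) * (2 * (m - 2 * j) + 2 * j + p) :=
    Nat.mul_pos (by omega) (by omega)
  omega

/-- telescoping coefficients -/
noncomputable def tcoef (p m : ℕ) : ℕ → ℝ
  | 0 => (bcoef p m 0)⁻¹
  | j + 1 => -(tcoef p m j) / bcoef p m (j + 1)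

/-- the chain `r²ᵏ Δᵏ g`. -/
noncomputable def uchain (p : ℕ) (g : MvPolynomial (Fin p) ℝ) (j : ℕ) :
    MvPolynomial (Fin p) ℝ := r2 p ^ j * ((mvLaplacian p ^ j) g)

lemma exists_preimage (hp : 0 < p) {g : MvPolynomial (Fin p) ℝ} {m : ℕ}
    (hg : g.IsHomogeneous m) :
    ∃ f : MvPolynomial (Fin p) ℝ, f.IsHomogeneous (m + 2) ∧ mvLaplacian p f = g := by
  classical
  set b : ℕ → ℝ := bcoef p m with hb
  set t : ℕ → ℝ := tcoef p m with ht
  have hbne : ∀ j, b j ≠ 0 := bcoef_ne_zero hp m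
  have ht0 : t 0 = (b 0)⁻¹ := rfl
  have hts : ∀ j, t (j + 1) = -(t j) / b (j + 1) := fun j => rfl
  set u : ℕ → MvPolynomial (Fin p) ℝ := uchain p g with hu
  have hu' : ∀ j, u j = r2 p ^ j * ((mvLaplacian p ^ j) g) := fun j => rfl
  refine ⟨∑ j ∈ Finset.range (m + 1), t j • (r2 p ^ (j + 1) * ((mvLaplacian p ^ j) g)),
    ?_, ?_⟩
  · -- homogeneity
    rw [← mem_homogeneousSubmodule]
    apply Submodule.sum_mem
    intro j _
    apply Submodule.smul_mem
    rw [mem_homogeneousSubmodule]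
    by_cases hjm : 2 * j ≤ m
    · have h1 := ((r2_isHomogeneous (p := p)).pow (j + 1)).mul (pow_lap_isHomogeneous hg j)
      rwa [show 2 * (j + 1) + (m - 2 * j) = m + 2 from by omega] at h1
    · rw [pow_lap_eq_zero hg (by omega), mul_zero]
      exact isHomogeneous_zero _ _ _
  · -- Laplacian equals g
    rw [map_sum]
    have key : ∀ j, mvLaplacian p (t j • (r2 p ^ (j + 1) * ((mvLaplacian p ^ j) g)))
        = (t j * b j) • u j + t j • u (j + 1) := by
      intro j
      rw [map_smul, lap_r2_pow_mul j (pow_lap_isHomogeneous hg j)]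
      rw [smul_add, smul_smul, mul_comm (t j)]
      congr 2
      · rw [hb, bcoef, mul_comm]
      · rw [hu' (j + 1), pow_lap_succ]
    simp only [key]
    rw [Finset.sum_add_distrib]
    rw [Finset.sum_range_succ' (fun j => (t j * b j) • u j) m]
    rw [Finset.sum_range_succ (fun j => t j • u (j + 1)) m]
    have hu0 : u 0 = g := by
      rw [hu' 0]; simp
    have hum : u (m + 1) = 0 := by
      rw [hu' (m + 1), pow_lap_eq_zero hg (by omega), mul_zero]
    have ht0b : (t 0 * b 0) • u 0 = g := by
      rw [ht0, inv_mul_cancel₀ (hbne 0), one_smul, hu0]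
    rw [ht0b, hum, smul_zero, add_zero]
    have hcancel : ∀ j, (t (j + 1) * b (j + 1)) • u (j + 1) + t j • u (j + 1) = 0 := by
      intro j
      rw [hts j, div_mul_cancel₀ _ (hbne (j + 1)), neg_smul, neg_add_cancel]
    rw [add_comm (∑ j ∈ Finset.range m, (t (j + 1) * b (j + 1)) • u (j + 1)) g, add_assoc,
      ← Finset.sum_add_distrib]
    rw [Finset.sum_congr rfl fun j _ => hcancel j]
    simp

end Harmonic

namespace Harmonic

lemma sum_id_eq_degree {α : Type*} (f : α →₀ ℕ) : (f.sum fun _ => id) = f.degree := by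
  rw [Finsupp.degree, Finsupp.sum]
  rfl

/-- degrees-`k` finsupps correspond to `Sym`. -/
noncomputable def degreeEquivSym (p k : ℕ) :
    {d : Fin p →₀ ℕ // d.degree = k} ≃ Sym (Fin p) k where
  toFun d := ⟨Finsupp.toMultiset d.1, by
    rw [Finsupp.card_toMultiset, sum_id_eq_degree]
    exact d.2⟩
  invFun s := ⟨Multiset.toFinsupp s.1, by
    have h2 : Multiset.card (Finsupp.toMultiset (Multiset.toFinsupp s.1)) = k := by
      rw [Multiset.toFinsupp_toMultiset]
      exact s.2
    rwa [Finsupp.card_toMultiset, sum_id_eq_degree] at h2⟩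
  left_inv d := by
    ext1
    exact Finsupp.toMultiset_toFinsupp d.1
  right_inv s := by
    apply Subtype.ext
    exact Multiset.toFinsupp_toMultiset s.1

end Harmonic

namespace Harmonic

lemma finrank_homog (p k : ℕ) :
    Module.finrank ℝ ↥(homogeneousSubmodule (Fin p) ℝ k) = (p + k - 1).choose k := by
  classical
  have hfin : {d : Fin p →₀ ℕ | d.degree = k}.Finite :=
    (Finsupp.finite_of_degree_le k).subset (fun d hd => le_of_eq hd)
  haveI := hfin.fintype
  let eq1 : ↥(homogeneousSubmodule (Fin p) ℝ k) ≃ₗ[ℝ]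
      ↥(restrictSupport ℝ {d : Fin p →₀ ℕ | d.degree = k}) :=
    LinearEquiv.ofEq _ _ (homogeneousSubmodule_eq_finsupp_supported (Fin p) ℝ k)
  let hb : Module.Basis {d : Fin p →₀ ℕ | d.degree = k} ℝ ↥(homogeneousSubmodule (Fin p) ℝ k) :=
    (basisRestrictSupport ℝ _).map eq1.symm
  rw [Module.finrank_eq_card_basis hb]
  have e2 : {d : Fin p →₀ ℕ | d.degree = k} ≃ Sym (Fin p) k := degreeEquivSym p k
  rw [Fintype.card_congr e2, Sym.card_sym_eq_choose, Fintype.card_fin]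

instance (p k : ℕ) : FiniteDimensional ℝ ↥(homogeneousSubmodule (Fin p) ℝ k) := by
  classical
  have hfin : {d : Fin p →₀ ℕ | d.degree = k}.Finite :=
    (Finsupp.finite_of_degree_le k).subset (fun d hd => le_of_eq hd)
  haveI := hfin.fintype
  let eq1 : ↥(homogeneousSubmodule (Fin p) ℝ k) ≃ₗ[ℝ]
      ↥(restrictSupport ℝ {d : Fin p →₀ ℕ | d.degree = k}) :=
    LinearEquiv.ofEq _ _ (homogeneousSubmodule_eq_finsupp_supported (Fin p) ℝ k)
  exact Module.Finite.of_basis ((basisRestrictSupport ℝ _).map eq1.symm)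

end Harmonic


open Harmonic

set_option linter.unusedSectionVars false

/-- For `p ≥ 2` and `n ≥ 1`, the dimension over `ℝ` of the space of
harmonic homogeneous polynomials of degree `n` in `p` variables is
`N(p,n) = C(n+p−2, n) + C(n+p−3, n−1)`, which equals `((2n+p−2)/n)·C(n+p−3, n−1)`. -/
theorem finrank_harmonic_homogeneous_polynomials
    (p n : ℕ) (hp : 2 ≤ p) (hn : 1 ≤ n) :
    Module.finrank ℝ
        ↥(MvPolynomial.homogeneousSubmodule (Fin p) ℝ n ⊓ LinearMap.ker (mvLaplacian p)) =
        Nat.choose (n + p - 2) n + Nat.choose (n + p - 3) (n - 1) ∧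
      (Module.finrank ℝ
          ↥(MvPolynomial.homogeneousSubmodule (Fin p) ℝ n ⊓ LinearMap.ker (mvLaplacian p)) : ℚ) =
        ((2 * n + p - 2 : ℚ) / (n : ℚ)) * (Nat.choose (n + p - 3) (n - 1) : ℚ) := by
  obtain ⟨q, rfl⟩ : ∃ q, p = q + 2 := ⟨p - 2, by omega⟩
  obtain ⟨m, rfl⟩ : ∃ m, n = m + 1 := ⟨n - 1, by omega⟩
  have e1 : m + 1 + (q + 2) - 2 = m + q + 1 := by omega
  have e2 : m + 1 + (q + 2) - 3 = m + q := by omega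
  have e3 : m + 1 - 1 = m := by omega
  rw [e1, e2, e3]
  set V := MvPolynomial.homogeneousSubmodule (Fin (q + 2)) ℝ (m + 1) with hV
  set Δ := mvLaplacian (q + 2) with hΔ
  -- main finrank computation
  have hmain : Module.finrank ℝ ↥(V ⊓ LinearMap.ker Δ) =
      (m + q + 1).choose (m + 1) + (m + q).choose m := by
    rcases Nat.eq_zero_or_pos m with hm | hm
    · -- n = 1
      subst hm
      have hsub : V ≤ LinearMap.ker Δ := by
        intro φ hφ
        rw [LinearMap.mem_ker]
        exact lap_eq_zero_of_le_one ((mem_homogeneousSubmodule _ _).mp hφ) le_rfl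
      rw [inf_eq_left.mpr hsub, hV, finrank_homog]
      simp only [zero_add, Nat.choose_one_right, Nat.choose_zero_right]
      omega
    · -- n ≥ 2
      obtain ⟨l, rfl⟩ : ∃ l, m = l + 1 := ⟨m - 1, by omega⟩
      -- kernel as restricted map
      have hker : Module.finrank ℝ ↥(V ⊓ LinearMap.ker Δ) =
          Module.finrank ℝ ↥(LinearMap.ker (Δ.domRestrict V)) := by
        rw [LinearMap.ker_domRestrict]
        have hc : Submodule.comap V.subtype (LinearMap.ker Δ) =
            Submodule.comap V.subtype (V ⊓ LinearMap.ker Δ) := by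
          rw [Submodule.comap_inf, Submodule.comap_subtype_self, top_inf_eq]
        rw [hc]
        exact (Submodule.comapSubtypeEquivOfLe inf_le_left).finrank_eq.symm
      have hmap : Submodule.map Δ V = MvPolynomial.homogeneousSubmodule (Fin (q + 2)) ℝ l := by
        apply le_antisymm
        · rintro _ ⟨φ, hφ, rfl⟩
          have hφ' : φ.IsHomogeneous (l + 1 + 1) := hφ
          have h2 := lap_isHomogeneous hφ'
          rw [show l + 1 + 1 - 2 = l from by omega] at h2
          exact (mem_homogeneousSubmodule _ _).mpr h2
        · intro g hg
          rw [mem_homogeneousSubmodule] at hg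
          obtain ⟨f, hf, hΔf⟩ := exists_preimage (by omega) hg
          exact ⟨f, (mem_homogeneousSubmodule _ _).mpr hf, hΔf⟩
      have hrn := LinearMap.finrank_range_add_finrank_ker (Δ.domRestrict V)
      rw [LinearMap.range_domRestrict, hmap] at hrn
      rw [hker]
      have hV' : Module.finrank ℝ ↥V = (q + 2 + (l + 1 + 1) - 1).choose (l + 1 + 1) :=
        finrank_homog _ _
      have hW' : Module.finrank ℝ ↥(MvPolynomial.homogeneousSubmodule (Fin (q + 2)) ℝ l) =
          (q + 2 + l - 1).choose l := finrank_homog _ _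
      rw [hW', hV'] at hrn
      -- Pascal arithmetic
      have epas : (q + 2 + (l + 1 + 1) - 1).choose (l + 1 + 1) =
          ((l + 1) + q + 1).choose (l + 1 + 1) + ((l + 1) + q).choose (l + 1)
            + (q + 2 + l - 1).choose l := by
        have h1 : q + 2 + (l + 1 + 1) - 1 = (l + q + 2) + 1 := by omega
        have h2 : q + 2 + l - 1 = l + q + 1 := by omega
        rw [h1, h2]
        rw [Nat.choose_succ_succ (l + q + 2) (l + 1)]
        have h3 : (l + q + 2).choose (l + 1) = (l + q + 1).choose l + (l + q + 1).choose (l + 1) := by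
          rw [show l + q + 2 = (l + q + 1) + 1 from by omega]
          exact Nat.choose_succ_succ _ _
        have h4 : l + 1 + q + 1 = l + q + 2 := by omega
        have h5 : l + 1 + q = l + q + 1 := by omega
        rw [h3, h4, h5]
        ring
      omega
  refine ⟨hmain, ?_⟩
  rw [hmain]
  have hnat : (m + 1) * (m + q + 1).choose (m + 1) = (m + q + 1) * (m + q).choose m := by
    have h := Nat.add_one_mul_choose_eq (m + q) m
    rw [mul_comm]
    exact h.symm
  have hnatQ : ((m : ℚ) + 1) * ((m + q + 1).choose (m + 1) : ℚ)
      = ((m : ℚ) + (q : ℚ) + 1) * ((m + q).choose m : ℚ) := by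
    exact_mod_cast congrArg (Nat.cast : ℕ → ℚ) hnat
  have hm1 : ((m : ℚ) + 1) ≠ 0 := by positivity
  rw [div_mul_eq_mul_div, eq_div_iff (by push_cast; exact hm1)]
  push_cast
  linear_combination hnatQ
end

section
/- Let α, β > −1 and let w(x) = (1−x)^α (1+x)^β on (−1,1). For each n ∈ ℕ define ψ_n(x) = (1/w(x))·(d/dx)^n [w(x)(1−x²)^n] for x ∈ (−1,1). Then there exists a real polynomial q_n of degree exactly n such that ψ_n(x) = q_n(x) for all x ∈ (−1,1). -/
/-- The Jacobi weight `w(x) = (1−x)^α (1+x)^β` (real powers). -/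
noncomputable def jacobiWeight (α β : ℝ) (x : ℝ) : ℝ :=
  (1 - x) ^ α * (1 + x) ^ β

/-- The Rodrigues expression `ψ_n(x) = (1/w(x)) (d/dx)^n [w(x)(1−x²)^n]`. -/
noncomputable def rodrigues (α β : ℝ) (n : ℕ) (x : ℝ) : ℝ :=
  (1 / jacobiWeight α β x) *
    iteratedDeriv n (fun y => jacobiWeight α β y * (1 - y ^ 2) ^ n) x

open Polynomial

/-- Polynomial sequence from differentiating `(1-x)^(α+n-k)(1+x)^(β+n-k) p(x)`. -/
noncomputable def jacP (α β : ℝ) (n : ℕ) : ℕ → Polynomial ℝ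
  | 0 => 1
  | (k+1) =>
      (C (-(α + n - k)) * (1 + X) + C (β + n - k) * (1 - X)) * jacP α β n k
        + (1 - X) * (1 + X) * derivative (jacP α β n k)

lemma jacP_succ (α β : ℝ) (n k : ℕ) :
    jacP α β n (k+1) =
      (C (-(α + n - k)) * (1 + X) + C (β + n - k) * (1 - X)) * jacP α β n k
        + (1 - X) * (1 + X) * derivative (jacP α β n k) := rfl

lemma jacP_natDegree_le (α β : ℝ) (n : ℕ) : ∀ k, (jacP α β n k).natDegree ≤ k := by
  intro k
  induction k with
  | zero => simp [jacP]
  | succ k ih =>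
    rw [jacP]
    apply (Polynomial.natDegree_add_le _ _).trans
    apply max_le
    · apply (Polynomial.natDegree_mul_le).trans
      have h1 : (C (-(α + n - k)) * (1 + X) + C (β + n - k) * (1 - X)).natDegree ≤ 1 := by
        compute_degree
      omega
    · rcases Nat.eq_zero_or_pos ((jacP α β n k).natDegree) with h0 | hpos
      · obtain ⟨a, ha⟩ := Polynomial.natDegree_eq_zero.mp h0
        rw [← ha, Polynomial.derivative_C]
        simp
      · apply (Polynomial.natDegree_mul_le).trans
        have h2 : ((1 - X : Polynomial ℝ) * (1 + X)).natDegree ≤ 2 := by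
          apply (Polynomial.natDegree_mul_le).trans
          have : (1 - X : Polynomial ℝ).natDegree ≤ 1 := by compute_degree
          have : (1 + X : Polynomial ℝ).natDegree ≤ 1 := by compute_degree
          omega
        have h3 := Polynomial.natDegree_derivative_le (jacP α β n k)
        omega

lemma jacP_coeff_succ (α β : ℝ) (n k : ℕ) :
    (jacP α β n (k+1)).coeff (k+1) = -(α + β + 2*n - k) * (jacP α β n k).coeff k := by
  have hd := jacP_natDegree_le α β n k
  set p := jacP α β n k with hp
  have hc1 : p.coeff (k+1) = 0 :=
    Polynomial.coeff_eq_zero_of_natDegree_lt (by omega)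
  have hder : (derivative p).coeff (k+1) = 0 := by
    apply Polynomial.coeff_eq_zero_of_natDegree_lt
    have := Polynomial.natDegree_derivative_le p
    omega
  rw [jacP]
  rw [Polynomial.coeff_add]
  have e1 : ((C (-(α + n - k)) * (1 + X) + C (β + n - k) * (1 - X)) * p).coeff (k+1)
      = (-(α + n - k) - (β + n - k)) * p.coeff k := by
    have : (C (-(α + n - k)) * (1 + X) + C (β + n - k) * (1 - X)) * p
        = C (-(α + n - k)) * p + C (-(α + n - k)) * (X * p)
          + (C (β + n - k) * p - C (β + n - k) * (X * p)) := by ring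
    rw [this]
    simp only [Polynomial.coeff_add, Polynomial.coeff_sub, Polynomial.coeff_C_mul,
      Polynomial.coeff_X_mul, hc1]
    ring
  have e2 : ((1 - X) * (1 + X) * derivative p).coeff (k+1) = -(k : ℝ) * p.coeff k := by
    have : (1 - X : Polynomial ℝ) * (1 + X) * derivative p
        = derivative p - X ^ 2 * derivative p := by ring
    rw [this, Polynomial.coeff_sub, hder]
    rcases Nat.eq_zero_or_pos k with rfl | hk
    · have hp0 : derivative p = 0 := by
        obtain ⟨a, ha⟩ := Polynomial.natDegree_eq_zero.mp (Nat.le_zero.mp hd)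
        rw [← ha, Polynomial.derivative_C]
      simp [hp0]
    · have hX : (X ^ 2 * derivative p).coeff (k+1) = (derivative p).coeff (k-1) := by
        have : k + 1 = (k - 1) + 2 := by omega
        rw [this, Polynomial.coeff_X_pow_mul]
      rw [hX, Polynomial.coeff_derivative]
      have : k - 1 + 1 = k := by omega
      rw [this, Nat.cast_sub (by omega : 1 ≤ k)]
      push_cast
      ring
  rw [e1, e2]
  push_cast
  ring

lemma jacP_coeff_ne_zero (α β : ℝ) (hα : -1 < α) (hβ : -1 < β) (n : ℕ) :
    ∀ k, k ≤ n → (jacP α β n k).coeff k ≠ 0 := by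
  intro k
  induction k with
  | zero => intro _; simp [jacP]
  | succ k ih =>
    intro hk
    rw [jacP_coeff_succ]
    have h1 : (jacP α β n k).coeff k ≠ 0 := ih (by omega)
    have h2 : -(α + β + 2*n - k) ≠ 0 := by
      have hkn : (k : ℝ) + 1 ≤ (n : ℝ) := by exact_mod_cast hk
      have : (0:ℝ) ≤ k := Nat.cast_nonneg k
      intro h
      nlinarith
    exact mul_ne_zero h2 h1

/-- Derivative of `(1-x)^A * ((1+x)^B * p(x))` on `(-1,1)`. -/
lemma hasDerivAt_aux (A B : ℝ) (p : Polynomial ℝ) {x : ℝ} (hx : x ∈ Set.Ioo (-1:ℝ) 1) :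
    HasDerivAt (fun y => (1 - y) ^ A * ((1 + y) ^ B * p.eval y))
      ((1 - x) ^ (A - 1) * ((1 + x) ^ (B - 1) *
        ((C (-A) * (1 + X) + C B * (1 - X)) * p
          + (1 - X) * (1 + X) * derivative p).eval x)) x := by
  obtain ⟨hx1, hx2⟩ := hx
  have h1m : (0:ℝ) < 1 - x := by linarith
  have h1p : (0:ℝ) < 1 + x := by linarith
  have d1 : HasDerivAt (fun y : ℝ => 1 - y) (-1) x := by
    simpa using ((hasDerivAt_id x).const_sub 1)
  have d2 : HasDerivAt (fun y : ℝ => 1 + y) 1 x := by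
    simpa using ((hasDerivAt_id x).const_add 1)
  have h1 : HasDerivAt (fun y : ℝ => (1 - y) ^ A) (-1 * A * (1 - x) ^ (A - 1)) x :=
    d1.rpow_const (Or.inl h1m.ne')
  have h2 : HasDerivAt (fun y : ℝ => (1 + y) ^ B) (1 * B * (1 + x) ^ (B - 1)) x :=
    d2.rpow_const (Or.inl h1p.ne')
  have h3 : HasDerivAt (fun y : ℝ => p.eval y) (p.derivative.eval x) x := p.hasDerivAt x
  have := h1.mul (h2.mul h3)
  convert this using 1
  · exact rfl
  · exact rfl
  · exact rfl
  have eA : (1 - x) ^ A = (1 - x) ^ (A - 1) * (1 - x) := by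
    rw [show A = (A-1)+1 by ring, Real.rpow_add h1m, Real.rpow_one]
    ring_nf
  have eB : (1 + x) ^ B = (1 + x) ^ (B - 1) * (1 + x) := by
    rw [show B = (B-1)+1 by ring, Real.rpow_add h1p, Real.rpow_one]
    ring_nf
  simp only [Pi.mul_apply]
  rw [eA, eB]
  simp only [Polynomial.eval_add, Polynomial.eval_mul, Polynomial.eval_sub, Polynomial.eval_one,
    Polynomial.eval_X, Polynomial.eval_C, Real.rpow_one]
  ring

lemma iteratedDeriv_eq (α β : ℝ) (hα : -1 < α) (hβ : -1 < β) (n : ℕ) :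
    ∀ k, ∀ x ∈ Set.Ioo (-1:ℝ) 1,
      iteratedDeriv k (fun y => jacobiWeight α β y * (1 - y ^ 2) ^ n) x
        = (1 - x) ^ (α + n - k) * ((1 + x) ^ (β + n - k) * (jacP α β n k).eval x) := by
  intro k
  induction k with
  | zero =>
    intro x hx
    obtain ⟨hx1, hx2⟩ := hx
    have h1m : (0:ℝ) < 1 - x := by linarith
    have h1p : (0:ℝ) < 1 + x := by linarith
    simp only [iteratedDeriv_zero, jacobiWeight, jacP, Polynomial.eval_one, mul_one,
      Nat.cast_zero, sub_zero]
    have : (1 - x ^ 2) ^ n = (1 - x) ^ (n:ℝ) * (1 + x) ^ (n:ℝ) := by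
      rw [Real.rpow_natCast, Real.rpow_natCast, ← mul_pow]
      ring_nf
    rw [this, Real.rpow_add h1m, Real.rpow_add h1p]
    ring
  | succ k ih =>
    intro x hx
    rw [iteratedDeriv_succ]
    have heq : (iteratedDeriv k (fun y => jacobiWeight α β y * (1 - y ^ 2) ^ n))
        =ᶠ[nhds x] (fun y => (1 - y) ^ (α + n - k) * ((1 + y) ^ (β + n - k) * (jacP α β n k).eval y)) := by
      filter_upwards [isOpen_Ioo.mem_nhds hx] with y hy
      exact ih y hy
    rw [heq.deriv_eq]
    have hd := (hasDerivAt_aux (α + n - k) (β + n - k) (jacP α β n k) hx).deriv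
    rw [hd]
    have e1 : α + n - k - 1 = α + n - (k+1 : ℕ) := by push_cast; ring
    have e2 : β + n - k - 1 = β + n - (k+1 : ℕ) := by push_cast; ring
    rw [e1, e2, jacP_succ]

/-- For `α, β > −1`, the Rodrigues formula
`ψ_n(x) = (1/w(x)) (d/dx)^n [w(x)(1−x²)^n]` with `w(x) = (1−x)^α (1+x)^β` defines,
on `(−1,1)`, a polynomial of degree exactly `n`. -/
theorem rodrigues_is_polynomial
    (α β : ℝ) (hα : -1 < α) (hβ : -1 < β) (n : ℕ) :
    ∃ q : Polynomial ℝ, q.degree = n ∧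
      ∀ x ∈ Set.Ioo (-1 : ℝ) 1, rodrigues α β n x = q.eval x := by
  refine ⟨jacP α β n n, ?_, ?_⟩
  · have h1 : (jacP α β n n).degree ≤ n :=
      Polynomial.natDegree_le_iff_degree_le.mp (jacP_natDegree_le α β n n)
    have h2 : (n : WithBot ℕ) ≤ (jacP α β n n).degree :=
      Polynomial.le_degree_of_ne_zero (jacP_coeff_ne_zero α β hα hβ n n le_rfl)
    exact le_antisymm h1 h2
  · intro x hx
    obtain ⟨hx1, hx2⟩ := hx
    have h1m : (0:ℝ) < 1 - x := by linarith
    have h1p : (0:ℝ) < 1 + x := by linarith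
    have hw : jacobiWeight α β x ≠ 0 :=
      (mul_pos (Real.rpow_pos_of_pos h1m α) (Real.rpow_pos_of_pos h1p β)).ne'
    rw [rodrigues, iteratedDeriv_eq α β hα hβ n n x ⟨hx1, hx2⟩]
    have eα : α + n - n = α := by ring
    have eβ : β + n - n = β := by ring
    rw [eα, eβ]
    rw [jacobiWeight] at hw ⊢
    field_simp
end

section
/- Let α, β > −1, let w(x) = (1−x)^α (1+x)^β on (−1,1), and for n ∈ ℕ define ψ_n(x) = (1/w(x))·(d/dx)^n [w(x)(1−x²)^n]. Then for every natural number k with 0 ≤ k < n, ∫_{−1}^1 ψ_n(x) x^k w(x) dx = 0. -/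
open MeasureTheory

open Polynomial Set Filter Topology


noncomputable def rodQ (a b : ℝ) (p : ℝ[X]) : ℝ[X] :=
  -(C a) * (1 + X) * p + C b * (1 - X) * p + (1 - X ^ 2) * derivative p

lemma hasDerivAt_explicit (a b : ℝ) (p : ℝ[X]) {x : ℝ} (hx : x ∈ Set.Ioo (-1 : ℝ) 1) :
    HasDerivAt (fun y => (1 - y) ^ a * (1 + y) ^ b * p.eval y)
      ((1 - x) ^ (a - 1) * (1 + x) ^ (b - 1) * (rodQ a b p).eval x) x := by
  have hx1 : (0 : ℝ) < 1 - x := by linarith [hx.2]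
  have hx2 : (0 : ℝ) < 1 + x := by linarith [hx.1]
  have hu : HasDerivAt (fun y : ℝ => (1 - y) ^ a) (a * (1 - x) ^ (a - 1) * (-1)) x := by
    exact (Real.hasDerivAt_rpow_const (Or.inl hx1.ne')).comp x
      ((hasDerivAt_id x).const_sub 1)
  have hv : HasDerivAt (fun y : ℝ => (1 + y) ^ b) (b * (1 + x) ^ (b - 1) * 1) x := by
    exact (Real.hasDerivAt_rpow_const (Or.inl hx2.ne')).comp x
      ((hasDerivAt_id x).const_add 1)
  have hp : HasDerivAt (fun y => p.eval y) (p.derivative.eval x) x := p.hasDerivAt x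
  have h := (hu.fun_mul hv).fun_mul hp
  refine h.congr_deriv (Eq.symm ?_)
  have e1 : (1 - x) ^ a = (1 - x) ^ (a - 1) * (1 - x) := by
    rw [← Real.rpow_add_one hx1.ne' (a - 1), sub_add_cancel]
  have e2 : (1 + x) ^ b = (1 + x) ^ (b - 1) * (1 + x) := by
    rw [← Real.rpow_add_one hx2.ne' (b - 1), sub_add_cancel]
  simp only [rodQ, eval_add, eval_mul, eval_neg, eval_C, eval_one, eval_X, eval_sub, eval_pow,
    e1, e2]
  ring

lemma iteratedDeriv_formula (α β : ℝ) (n : ℕ) :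
    ∀ j, j ≤ n → ∃ p : ℝ[X], ∀ x ∈ Set.Ioo (-1 : ℝ) 1,
      iteratedDeriv j (fun y => jacobiWeight α β y * (1 - y ^ 2) ^ n) x
        = (1 - x) ^ (α + n - j) * (1 + x) ^ (β + n - j) * p.eval x := by
  intro j
  induction j with
  | zero =>
    intro _
    refine ⟨1, fun x hx => ?_⟩
    have hx1 : (0 : ℝ) < 1 - x := by linarith [hx.2]
    have hx2 : (0 : ℝ) < 1 + x := by linarith [hx.1]
    have e : (1 : ℝ) - x ^ 2 = (1 - x) * (1 + x) := by ring
    rw [iteratedDeriv_zero]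
    simp only [jacobiWeight, eval_one, mul_one, Nat.cast_zero, sub_zero, e, mul_pow]
    rw [Real.rpow_add hx1, Real.rpow_add hx2, Real.rpow_natCast, Real.rpow_natCast]
    ring
  | succ j ih =>
    intro hj
    obtain ⟨p, hp⟩ := ih (le_of_lt hj)
    refine ⟨rodQ (α + n - j) (β + n - j) p, fun x hx => ?_⟩
    have heq : iteratedDeriv j (fun y => jacobiWeight α β y * (1 - y ^ 2) ^ n) =ᶠ[nhds x]
        fun y => (1 - y) ^ (α + n - j) * (1 + y) ^ (β + n - j) * p.eval y := by
      filter_upwards [isOpen_Ioo.mem_nhds hx] with y hy using hp y hy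
    rw [iteratedDeriv_succ, heq.deriv_eq, (hasDerivAt_explicit _ _ p hx).deriv]
    have e1 : α + n - j - 1 = α + n - (j + 1 : ℕ) := by push_cast; ring
    have e2 : β + n - j - 1 = β + n - (j + 1 : ℕ) := by push_cast; ring
    rw [e1, e2]

lemma hasDerivAt_iteratedDeriv (α β : ℝ) (n j : ℕ) (hj : j ≤ n) {x : ℝ}
    (hx : x ∈ Set.Ioo (-1 : ℝ) 1) :
    HasDerivAt (iteratedDeriv j (fun y => jacobiWeight α β y * (1 - y ^ 2) ^ n))
      (iteratedDeriv (j + 1) (fun y => jacobiWeight α β y * (1 - y ^ 2) ^ n) x) x := by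
  obtain ⟨p, hp⟩ := iteratedDeriv_formula α β n j hj
  have heq : iteratedDeriv j (fun y => jacobiWeight α β y * (1 - y ^ 2) ^ n) =ᶠ[nhds x]
      fun y => (1 - y) ^ (α + n - j) * (1 + y) ^ (β + n - j) * p.eval y := by
    filter_upwards [isOpen_Ioo.mem_nhds hx] with y hy using hp y hy
  have h1 : HasDerivAt (iteratedDeriv j (fun y => jacobiWeight α β y * (1 - y ^ 2) ^ n))
      ((1 - x) ^ (α + ↑n - ↑j - 1) * (1 + x) ^ (β + ↑n - ↑j - 1) *
        (rodQ (α + n - j) (β + n - j) p).eval x) x :=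
    (hasDerivAt_explicit _ _ p hx).congr_of_eventuallyEq heq
  rw [iteratedDeriv_succ, h1.deriv]
  exact h1

lemma tendsto_iteratedDeriv_one (α β : ℝ) (hα : -1 < α) (hβ : -1 < β) (n j : ℕ) (hj : j < n) :
    Tendsto (iteratedDeriv j (fun y => jacobiWeight α β y * (1 - y ^ 2) ^ n))
      (nhdsWithin 1 (Set.Ioo (-1 : ℝ) 1)) (nhds 0) := by
  obtain ⟨p, hp⟩ := iteratedDeriv_formula α β n j hj.le
  have ha : (0 : ℝ) < α + n - j := by
    have : (j : ℝ) + 1 ≤ n := by exact_mod_cast hj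
    linarith
  have hb : (0 : ℝ) < β + n - j := by
    have : (j : ℝ) + 1 ≤ n := by exact_mod_cast hj
    linarith
  have t0 : Tendsto (fun x : ℝ => 1 - x) (nhdsWithin 1 (Set.Ioo (-1 : ℝ) 1)) (nhds 0) := by
    apply Tendsto.mono_left _ nhdsWithin_le_nhds
    have h : Tendsto (fun x : ℝ => 1 - x) (nhds 1) (nhds (1 - 1)) :=
      (continuous_const.sub continuous_id).tendsto 1
    simpa using h
  have t1 : Tendsto (fun x : ℝ => (1 - x) ^ (α + n - j))
      (nhdsWithin 1 (Set.Ioo (-1 : ℝ) 1)) (nhds 0) := by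
    have := (Real.continuousAt_rpow_const 0 (α + n - j) (Or.inr ha.le)).tendsto.comp t0
    simpa [Real.zero_rpow ha.ne', Function.comp_def] using this
  have t2 : Tendsto (fun x : ℝ => (1 + x) ^ (β + n - j))
      (nhdsWithin 1 (Set.Ioo (-1 : ℝ) 1)) (nhds ((2 : ℝ) ^ (β + n - j))) := by
    have tb : Tendsto (fun x : ℝ => 1 + x) (nhdsWithin 1 (Set.Ioo (-1 : ℝ) 1)) (nhds 2) := by
      apply Tendsto.mono_left _ nhdsWithin_le_nhds
      have h : Tendsto (fun x : ℝ => 1 + x) (nhds 1) (nhds (1 + 1)) :=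
        (continuous_const.add continuous_id).tendsto 1
      norm_num at h; exact h
    exact (Real.continuousAt_rpow_const 2 _ (Or.inl two_ne_zero)).tendsto.comp tb
  have t3 : Tendsto (fun x : ℝ => p.eval x) (nhdsWithin 1 (Set.Ioo (-1 : ℝ) 1))
      (nhds (p.eval 1)) := (p.continuous_aeval.tendsto 1).mono_left nhdsWithin_le_nhds
  have := (t1.mul t2).mul t3
  rw [show (0 : ℝ) * (2 : ℝ) ^ (β + n - j) * p.eval 1 = 0 by ring] at this
  exact this.congr' (by filter_upwards [self_mem_nhdsWithin] with x hx; exact (hp x hx).symm)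

lemma tendsto_iteratedDeriv_negone (α β : ℝ) (hα : -1 < α) (hβ : -1 < β) (n j : ℕ) (hj : j < n) :
    Tendsto (iteratedDeriv j (fun y => jacobiWeight α β y * (1 - y ^ 2) ^ n))
      (nhdsWithin (-1) (Set.Ioo (-1 : ℝ) 1)) (nhds 0) := by
  obtain ⟨p, hp⟩ := iteratedDeriv_formula α β n j hj.le
  have ha : (0 : ℝ) < α + n - j := by
    have : (j : ℝ) + 1 ≤ n := by exact_mod_cast hj
    linarith
  have hb : (0 : ℝ) < β + n - j := by
    have : (j : ℝ) + 1 ≤ n := by exact_mod_cast hj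
    linarith
  have t0 : Tendsto (fun x : ℝ => 1 + x) (nhdsWithin (-1) (Set.Ioo (-1 : ℝ) 1)) (nhds 0) := by
    apply Tendsto.mono_left _ nhdsWithin_le_nhds
    have h : Tendsto (fun x : ℝ => 1 + x) (nhds (-1)) (nhds (1 + -1)) :=
      (continuous_const.add continuous_id).tendsto (-1)
    simpa using h
  have t1 : Tendsto (fun x : ℝ => (1 + x) ^ (β + n - j))
      (nhdsWithin (-1) (Set.Ioo (-1 : ℝ) 1)) (nhds 0) := by
    have := (Real.continuousAt_rpow_const 0 (β + n - j) (Or.inr hb.le)).tendsto.comp t0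
    simpa [Real.zero_rpow hb.ne', Function.comp_def] using this
  have t2 : Tendsto (fun x : ℝ => (1 - x) ^ (α + n - j))
      (nhdsWithin (-1) (Set.Ioo (-1 : ℝ) 1)) (nhds ((2 : ℝ) ^ (α + n - j))) := by
    have tb : Tendsto (fun x : ℝ => 1 - x) (nhdsWithin (-1) (Set.Ioo (-1 : ℝ) 1)) (nhds 2) := by
      apply Tendsto.mono_left _ nhdsWithin_le_nhds
      have h : Tendsto (fun x : ℝ => 1 - x) (nhds (-1)) (nhds (1 - -1)) :=
        (continuous_const.sub continuous_id).tendsto (-1)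
      norm_num at h; exact h
    exact (Real.continuousAt_rpow_const 2 _ (Or.inl two_ne_zero)).tendsto.comp tb
  have t3 : Tendsto (fun x : ℝ => p.eval x) (nhdsWithin (-1) (Set.Ioo (-1 : ℝ) 1))
      (nhds (p.eval (-1))) := (p.continuous_aeval.tendsto (-1)).mono_left nhdsWithin_le_nhds
  have := (t2.mul t1).mul t3
  rw [show (2 : ℝ) ^ (α + n - j) * 0 * p.eval (-1) = 0 by ring] at this
  exact this.congr' (by filter_upwards [self_mem_nhdsWithin] with x hx; exact (hp x hx).symm)


lemma continuousOn_W (α β : ℝ) :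
    ContinuousOn (fun x : ℝ => (1 - x) ^ α * (1 + x) ^ β) (Set.Ioo (-1 : ℝ) 1) := by
  intro x hx
  have hx1 : (1 : ℝ) - x ≠ 0 := by intro h; have := hx.2; linarith
  have hx2 : (1 : ℝ) + x ≠ 0 := by have := hx.1; intro h; linarith
  apply ContinuousAt.continuousWithinAt
  exact (((Real.continuousAt_rpow_const _ α (Or.inl hx1)).comp
      (continuous_const.sub continuous_id).continuousAt)).mul
    (((Real.continuousAt_rpow_const _ β (Or.inl hx2)).comp
      (continuous_const.add continuous_id).continuousAt))

lemma rpow_bound {t c : ℝ} (ht1 : 1 ≤ t) (ht2 : t ≤ 2) : t ^ c ≤ 2 ^ |c| := by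
  calc t ^ c ≤ t ^ |c| := Real.rpow_le_rpow_of_exponent_le ht1 (le_abs_self c)
  _ ≤ 2 ^ |c| := Real.rpow_le_rpow (by linarith) ht2 (abs_nonneg c)

lemma integrableOn_W (α β : ℝ) (hα : -1 < α) (hβ : -1 < β) :
    IntegrableOn (fun x : ℝ => (1 - x) ^ α * (1 + x) ^ β) (Set.Ioo (-1 : ℝ) 1) := by
  have hsplit : Set.Ioo (-1 : ℝ) 1 = Set.Ioc (-1 : ℝ) 0 ∪ Set.Ioo (0 : ℝ) 1 :=
    (Set.Ioc_union_Ioo_eq_Ioo (by norm_num) (by norm_num)).symm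
  rw [hsplit]
  apply IntegrableOn.union
  · -- on Ioc (-1) 0, dominate by 2^|α| * (1+x)^β
    have hint : IntegrableOn (fun x : ℝ => 2 ^ |α| * (1 + x) ^ β) (Set.Ioc (-1 : ℝ) 0) := by
      have h1 : IntervalIntegrable (fun x : ℝ => x ^ β) volume 0 1 :=
        intervalIntegral.intervalIntegrable_rpow' hβ
      have h2 := (h1.comp_add_right 1).const_mul (2 ^ |α|)
      rw [intervalIntegrable_iff] at h2
      simpa [Set.uIoc_of_le, add_comm] using h2
    apply hint.integrable.mono
    · apply (ContinuousOn.aestronglyMeasurable ?_ measurableSet_Ioc)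
      exact (continuousOn_W α β).mono (fun x hx => ⟨hx.1, lt_of_le_of_lt hx.2 one_pos⟩)
    · filter_upwards [ae_restrict_mem measurableSet_Ioc] with x hx
      have hx1 : (0 : ℝ) < 1 + x := by linarith [hx.1]
      have h1x : (1 : ℝ) ≤ 1 - x := by linarith [hx.2]
      have h2x : (1 : ℝ) - x ≤ 2 := by linarith [hx.1]
      have hb : (1 - x) ^ α ≤ 2 ^ |α| := rpow_bound h1x h2x
      rw [Real.norm_eq_abs, Real.norm_eq_abs,
        abs_of_nonneg (by positivity : (0:ℝ) ≤ (1-x)^α * (1+x)^β),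
        abs_of_nonneg (by positivity : (0:ℝ) ≤ (2:ℝ)^|α| * (1+x)^β)]
      exact mul_le_mul_of_nonneg_right hb (Real.rpow_nonneg hx1.le β)
  · -- on Ioo 0 1, dominate by (1-x)^α * 2^|β|
    have hint : IntegrableOn (fun x : ℝ => 2 ^ |β| * (1 - x) ^ α) (Set.Ioc (0 : ℝ) 1) := by
      have h1 : IntervalIntegrable (fun x : ℝ => x ^ α) volume 0 1 :=
        intervalIntegral.intervalIntegrable_rpow' hα
      have h2 := (IntervalIntegrable.iff_comp_neg (by simp)).mp h1
      have h3 := (h2.comp_sub_right 1).const_mul (2 ^ |β|)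
      norm_num at h3
      have h4 := h3.symm
      rw [intervalIntegrable_iff] at h4
      simpa [Set.uIoc_of_le] using h4
    have hint' : IntegrableOn (fun x : ℝ => 2 ^ |β| * (1 - x) ^ α) (Set.Ioo (0 : ℝ) 1) :=
      hint.mono_set Set.Ioo_subset_Ioc_self
    apply hint'.integrable.mono
    · apply (ContinuousOn.aestronglyMeasurable ?_ measurableSet_Ioo)
      exact (continuousOn_W α β).mono (fun x hx => ⟨by linarith [hx.1], hx.2⟩)
    · filter_upwards [ae_restrict_mem measurableSet_Ioo] with x hx
      have hx1 : (0 : ℝ) < 1 - x := by linarith [hx.2]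
      have h1x : (1 : ℝ) ≤ 1 + x := by linarith [hx.1]
      have h2x : (1 : ℝ) + x ≤ 2 := by linarith [hx.2]
      have hb : (1 + x) ^ β ≤ 2 ^ |β| := rpow_bound h1x h2x
      rw [Real.norm_eq_abs, Real.norm_eq_abs,
        abs_of_nonneg (by positivity : (0:ℝ) ≤ (1-x)^α * (1+x)^β),
        abs_of_nonneg (by positivity : (0:ℝ) ≤ (2:ℝ)^|β| * (1-x)^α)]
      calc (1-x)^α * (1+x)^β ≤ (1-x)^α * 2^|β| :=
            mul_le_mul_of_nonneg_left hb (Real.rpow_nonneg hx1.le α)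
      _ = 2^|β| * (1-x)^α := by ring

lemma integrableOn_cont_mul_W (α β : ℝ) (hα : -1 < α) (hβ : -1 < β) (r : ℝ → ℝ)
    (hr : Continuous r) :
    IntegrableOn (fun x : ℝ => r x * ((1 - x) ^ α * (1 + x) ^ β)) (Set.Ioo (-1 : ℝ) 1) := by
  obtain ⟨C, hC⟩ := (isCompact_Icc (a := (-1:ℝ)) (b := 1)).exists_bound_of_continuousOn
    hr.continuousOn
  have hC0 : 0 ≤ C := le_trans (norm_nonneg _) (hC 0 (by norm_num))
  apply Integrable.mono ((integrableOn_W α β hα hβ).const_mul C)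
  · exact (hr.continuousOn.mul (continuousOn_W α β)).aestronglyMeasurable measurableSet_Ioo
  · filter_upwards [ae_restrict_mem measurableSet_Ioo] with x hx
    have h1 : ‖r x‖ ≤ C := hC x ⟨hx.1.le, hx.2.le⟩
    calc ‖r x * ((1 - x) ^ α * (1 + x) ^ β)‖ = ‖r x‖ * ‖(1 - x) ^ α * (1 + x) ^ β‖ :=
          norm_mul _ _
    _ ≤ C * ‖(1 - x) ^ α * (1 + x) ^ β‖ := by
        exact mul_le_mul_of_nonneg_right h1 (norm_nonneg _)
    _ ≤ ‖C * ((1 - x) ^ α * (1 + x) ^ β)‖ := by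
        have e : ‖C * ((1 - x) ^ α * (1 + x) ^ β)‖ = |C| * ‖(1 - x) ^ α * (1 + x) ^ β‖ := by
          rw [norm_mul]; rfl
        rw [e]
        exact mul_le_mul_of_nonneg_right (le_abs_self C) (norm_nonneg _)

lemma hasDerivAt_H (α β : ℝ) (n k : ℕ) (hk : k < n) {x : ℝ} (hx : x ∈ Set.Ioo (-1 : ℝ) 1) :
    HasDerivAt (fun y => ∑ i ∈ Finset.range n, (-1 : ℝ) ^ i *
        ((Polynomial.derivative^[i] (X ^ k : ℝ[X])).eval y) *
        iteratedDeriv (n - 1 - i) (fun z => jacobiWeight α β z * (1 - z ^ 2) ^ n) y)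
      (x ^ k * iteratedDeriv n (fun z => jacobiWeight α β z * (1 - z ^ 2) ^ n) x) x := by
  set f := fun z : ℝ => jacobiWeight α β z * (1 - z ^ 2) ^ n with hf
  set q : ℕ → ℝ[X] := fun i => Polynomial.derivative^[i] (X ^ k : ℝ[X]) with hq
  have key : ∀ i ∈ Finset.range n,
      HasDerivAt (fun y => (-1 : ℝ) ^ i * (q i).eval y * iteratedDeriv (n - 1 - i) f y)
        ((-1 : ℝ) ^ i * ((q (i + 1)).eval x * iteratedDeriv (n - 1 - i) f x
          + (q i).eval x * iteratedDeriv (n - i) f x)) x := by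
    intro i hi
    have hi' : i < n := Finset.mem_range.mp hi
    have hqd : HasDerivAt (fun y => (-1 : ℝ) ^ i * (q i).eval y)
        ((-1 : ℝ) ^ i * (q (i + 1)).eval x) x := by
      have h1 : HasDerivAt (fun y => (q i).eval y) (((q i).derivative).eval x) x :=
        (q i).hasDerivAt x
      have h2 : (q i).derivative = q (i + 1) := (Function.iterate_succ_apply' _ _ _).symm
      rw [h2] at h1
      exact h1.const_mul _
    have hF : HasDerivAt (iteratedDeriv (n - 1 - i) f) (iteratedDeriv (n - i) f x) x := by
      have := hasDerivAt_iteratedDeriv α β n (n - 1 - i) (by omega) hx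
      rwa [show n - 1 - i + 1 = n - i by omega] at this
    have := hqd.fun_mul hF
    refine this.congr_deriv (Eq.symm ?_)
    ring
  have hsum := HasDerivAt.fun_sum key
  refine hsum.congr_deriv (Eq.symm ?_)
  have step : ∀ i ∈ Finset.range n,
      (-1 : ℝ) ^ i * ((q (i + 1)).eval x * iteratedDeriv (n - 1 - i) f x
          + (q i).eval x * iteratedDeriv (n - i) f x)
        = ((-1 : ℝ) ^ i * (q i).eval x * iteratedDeriv (n - i) f x)
          - ((-1 : ℝ) ^ (i + 1) * (q (i + 1)).eval x * iteratedDeriv (n - (i + 1)) f x) := by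
    intro i _
    rw [show n - (i + 1) = n - 1 - i by omega, pow_succ]
    ring
  rw [Finset.sum_congr rfl step, Finset.sum_range_sub'
    (f := fun i => (-1 : ℝ) ^ i * (q i).eval x * iteratedDeriv (n - i) f x)]
  have hT0 : (-1 : ℝ) ^ 0 * (q 0).eval x * iteratedDeriv (n - 0) f x
      = x ^ k * iteratedDeriv n f x := by
    simp [hq]
  have hTn : (-1 : ℝ) ^ n * (q n).eval x * iteratedDeriv (n - n) f x = 0 := by
    have : q n = 0 := Polynomial.iterate_derivative_eq_zero (by
      simpa [Polynomial.natDegree_X_pow] using hk)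
    simp [this]
  rw [hT0, hTn, sub_zero]

/-- For `α, β > −1` and `0 ≤ k < n`, the function `ψ_n` given by the
Rodrigues formula is orthogonal to `x^k` against the weight `w` on `(−1,1)`:
`∫_{−1}^1 ψ_n(x) x^k w(x) dx = 0`. -/
theorem rodrigues_orthogonal_to_lower_powers
    (α β : ℝ) (hα : -1 < α) (hβ : -1 < β) (n k : ℕ) (hk : k < n) :
    ∫ x in Set.Ioo (-1 : ℝ) 1, rodrigues α β n x * x ^ k * jacobiWeight α β x = 0 := by
  obtain ⟨p, hp⟩ := iteratedDeriv_formula α β n n le_rfl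
  set f := fun y : ℝ => jacobiWeight α β y * (1 - y ^ 2) ^ n with hf
  set G := fun x : ℝ => (x ^ k * p.eval x) * ((1 - x) ^ α * (1 + x) ^ β) with hG
  have hFn : ∀ x ∈ Set.Ioo (-1 : ℝ) 1,
      iteratedDeriv n f x = (1 - x) ^ α * (1 + x) ^ β * p.eval x := by
    intro x hx
    have h := hp x hx
    rwa [show α + n - n = α by ring, show β + n - n = β by ring] at h
  have hstep1 : ∫ x in Set.Ioo (-1 : ℝ) 1, rodrigues α β n x * x ^ k * jacobiWeight α β x
      = ∫ x in Set.Ioo (-1 : ℝ) 1, G x := by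
    apply setIntegral_congr_fun measurableSet_Ioo
    intro x hx
    have hx1 : (0 : ℝ) < 1 - x := by linarith [hx.2]
    have hx2 : (0 : ℝ) < 1 + x := by linarith [hx.1]
    have hw : jacobiWeight α β x ≠ 0 := by
      have := mul_pos (Real.rpow_pos_of_pos hx1 α) (Real.rpow_pos_of_pos hx2 β)
      exact this.ne'
    simp only [rodrigues, hG]
    rw [show iteratedDeriv n (fun y => jacobiWeight α β y * (1 - y ^ 2) ^ n) x
        = iteratedDeriv n f x from rfl, hFn x hx]
    have hwdef : jacobiWeight α β x = (1 - x) ^ α * (1 + x) ^ β := rfl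
    field_simp [hwdef]
  rw [hstep1]
  have hint : IntegrableOn G (Set.Ioo (-1 : ℝ) 1) :=
    integrableOn_cont_mul_W α β hα hβ _ ((continuous_pow k).mul p.continuous_aeval)
  -- the exhausting sequence
  set b : ℕ → ℝ := fun m => 1 - 1 / (m + 2) with hb
  have hbpos : ∀ m : ℕ, (0 : ℝ) < (m : ℝ) + 2 := fun m => by positivity
  have hbhalf : ∀ m : ℕ, 1 / ((m : ℝ) + 2) ≤ 1 / 2 := fun m =>
    one_div_le_one_div_of_le two_pos (by linarith [Nat.cast_nonneg (α := ℝ) m])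
  have hbmem : ∀ m, b m ∈ Set.Ioo (-1 : ℝ) 1 := by
    intro m
    constructor
    · have := hbhalf m; simp only [hb]; linarith
    · have : (0 : ℝ) < 1 / ((m : ℝ) + 2) := by positivity
      simp only [hb]; linarith
  have hble : ∀ m : ℕ, -(b m) ≤ b m := by
    intro m
    have := hbhalf m
    simp only [hb]
    linarith
  set s : ℕ → Set ℝ := fun m => Set.Ioo (-(b m)) (b m) with hs
  have hmono : Monotone s := by
    intro m m' hmm
    have hmb : b m ≤ b m' := by
      have : 1 / ((m' : ℝ) + 2) ≤ 1 / ((m : ℝ) + 2) :=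
        one_div_le_one_div_of_le (hbpos m) (by exact_mod_cast by omega : ((m : ℝ) + 2) ≤ m' + 2)
      simp only [hb]; linarith
    exact Set.Ioo_subset_Ioo (neg_le_neg hmb) hmb
  have hunion : (⋃ m, s m) = Set.Ioo (-1 : ℝ) 1 := by
    ext x
    simp only [Set.mem_iUnion, Set.mem_Ioo]
    constructor
    · rintro ⟨m, h1, h2⟩
      have h3 := hbmem m
      exact ⟨by linarith [h3.1, h3.2], by linarith [h3.2]⟩
    · rintro ⟨h1, h2⟩
      set d : ℝ := min (1 - x) (1 + x) with hd
      have hd0 : 0 < d := lt_min (by linarith) (by linarith)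
      obtain ⟨m, hm⟩ := exists_nat_gt (1 / d)
      refine ⟨m, ?_, ?_⟩
      · have hlt : 1 / ((m : ℝ) + 2) < d := by
          rw [div_lt_iff₀ (hbpos m)]
          calc (1 : ℝ) = d * (1 / d) := by field_simp
          _ < d * ((m : ℝ) + 2) := by
              apply mul_lt_mul_of_pos_left _ hd0
              linarith
        have : 1 / ((m : ℝ) + 2) < 1 + x := lt_of_lt_of_le hlt (min_le_right _ _)
        simp only [hb]; linarith
      · have hlt : 1 / ((m : ℝ) + 2) < d := by
          rw [div_lt_iff₀ (hbpos m)]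
          calc (1 : ℝ) = d * (1 / d) := by field_simp
          _ < d * ((m : ℝ) + 2) := by
              apply mul_lt_mul_of_pos_left _ hd0
              linarith
        have : 1 / ((m : ℝ) + 2) < 1 - x := lt_of_lt_of_le hlt (min_le_left _ _)
        simp only [hb]; linarith
  have htend1 : Tendsto (fun m => ∫ x in s m, G x) atTop
      (𝓝 (∫ x in Set.Ioo (-1 : ℝ) 1, G x)) := by
    have := tendsto_setIntegral_of_monotone (fun m => measurableSet_Ioo) hmono
      (hunion.symm ▸ hint)
    rwa [hunion] at this
  -- H and its values
  set H : ℝ → ℝ := fun y => ∑ i ∈ Finset.range n, (-1 : ℝ) ^ i *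
      ((Polynomial.derivative^[i] (X ^ k : ℝ[X])).eval y) * iteratedDeriv (n - 1 - i) f y
    with hH
  have hval : ∀ m, ∫ x in s m, G x = H (b m) - H (-(b m)) := by
    intro m
    have hsub : Set.Icc (-(b m)) (b m) ⊆ Set.Ioo (-1 : ℝ) 1 := by
      intro x hx
      have h3 := hbmem m
      exact ⟨by linarith [hx.1, h3.2], by linarith [hx.2, h3.2]⟩
    have hcongr : ∫ x in s m, G x = ∫ x in s m, x ^ k * iteratedDeriv n f x := by
      apply setIntegral_congr_fun measurableSet_Ioo
      intro x hx
      show G x = x ^ k * iteratedDeriv n f x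
      rw [hFn x (hsub ⟨hx.1.le, hx.2.le⟩), hG]
      ring
    rw [hcongr]
    have heq2 : ∫ x in s m, x ^ k * iteratedDeriv n f x
        = ∫ x in (-(b m))..(b m), x ^ k * iteratedDeriv n f x := by
      rw [intervalIntegral.integral_of_le (hble m), integral_Ioc_eq_integral_Ioo]
    rw [heq2]
    apply intervalIntegral.integral_eq_sub_of_hasDerivAt
    · intro x hx
      rw [Set.uIcc_of_le (hble m)] at hx
      exact hasDerivAt_H α β n k hk (hsub hx)
    · apply ContinuousOn.intervalIntegrable
      rw [Set.uIcc_of_le (hble m)]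
      apply ContinuousOn.congr (f := fun x : ℝ => x ^ k * ((1 - x) ^ α * (1 + x) ^ β * p.eval x))
      · exact ((continuous_pow k).continuousOn.mul
          (((continuousOn_W α β).mono hsub).mul p.continuous_aeval.continuousOn))
      · intro x hx
        show x ^ k * iteratedDeriv n f x = x ^ k * ((1 - x) ^ α * (1 + x) ^ β * p.eval x)
        rw [hFn x (hsub hx)]
  -- limits of H at the endpoints
  have hn0 : 0 < n := by omega
  have hHone : Tendsto H (nhdsWithin 1 (Set.Ioo (-1 : ℝ) 1)) (𝓝 0) := by
    rw [hH]
    have : Tendsto (fun y => ∑ i ∈ Finset.range n, (-1 : ℝ) ^ i *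
        ((Polynomial.derivative^[i] (X ^ k : ℝ[X])).eval y) * iteratedDeriv (n - 1 - i) f y)
        (nhdsWithin 1 (Set.Ioo (-1 : ℝ) 1)) (𝓝 (∑ i ∈ Finset.range n, (0 : ℝ))) := by
      apply tendsto_finset_sum
      intro i hi
      have hi' : i < n := Finset.mem_range.mp hi
      have tc : Tendsto (fun y : ℝ => (-1 : ℝ) ^ i *
          ((Polynomial.derivative^[i] (X ^ k : ℝ[X])).eval y))
          (nhdsWithin 1 (Set.Ioo (-1 : ℝ) 1))
          (𝓝 ((-1 : ℝ) ^ i * ((Polynomial.derivative^[i] (X ^ k : ℝ[X])).eval 1))) :=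
        ((continuous_const.mul (Polynomial.derivative^[i]
          (X ^ k : ℝ[X])).continuous_aeval).tendsto 1).mono_left nhdsWithin_le_nhds
      have tF := tendsto_iteratedDeriv_one α β hα hβ n (n - 1 - i) (by omega)
      have := tc.mul tF
      simpa using this
    simpa using this
  have hHnegone : Tendsto H (nhdsWithin (-1) (Set.Ioo (-1 : ℝ) 1)) (𝓝 0) := by
    rw [hH]
    have : Tendsto (fun y => ∑ i ∈ Finset.range n, (-1 : ℝ) ^ i *
        ((Polynomial.derivative^[i] (X ^ k : ℝ[X])).eval y) * iteratedDeriv (n - 1 - i) f y)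
        (nhdsWithin (-1) (Set.Ioo (-1 : ℝ) 1)) (𝓝 (∑ i ∈ Finset.range n, (0 : ℝ))) := by
      apply tendsto_finset_sum
      intro i hi
      have hi' : i < n := Finset.mem_range.mp hi
      have tc : Tendsto (fun y : ℝ => (-1 : ℝ) ^ i *
          ((Polynomial.derivative^[i] (X ^ k : ℝ[X])).eval y))
          (nhdsWithin (-1) (Set.Ioo (-1 : ℝ) 1))
          (𝓝 ((-1 : ℝ) ^ i * ((Polynomial.derivative^[i] (X ^ k : ℝ[X])).eval (-1)))) :=
        ((continuous_const.mul (Polynomial.derivative^[i]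
          (X ^ k : ℝ[X])).continuous_aeval).tendsto (-1)).mono_left nhdsWithin_le_nhds
      have tF := tendsto_iteratedDeriv_negone α β hα hβ n (n - 1 - i) (by omega)
      have := tc.mul tF
      simpa using this
    simpa using this
  -- b tends to 1 within Ioo, -b tends to -1 within Ioo
  have hinv : Tendsto (fun m : ℕ => 1 / ((m : ℝ) + 2)) atTop (𝓝 0) := by
    simp only [one_div]
    exact (tendsto_atTop_add_const_right atTop (2 : ℝ)
      tendsto_natCast_atTop_atTop).inv_tendsto_atTop
  have hbtend : Tendsto b atTop (nhdsWithin 1 (Set.Ioo (-1 : ℝ) 1)) := by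
    rw [tendsto_nhdsWithin_iff]
    constructor
    · have := tendsto_const_nhds (α := ℕ) (x := (1 : ℝ)) |>.sub hinv
      simpa [hb] using this
    · exact Eventually.of_forall hbmem
  have hnbtend : Tendsto (fun m => -(b m)) atTop
      (nhdsWithin (-1) (Set.Ioo (-1 : ℝ) 1)) := by
    rw [tendsto_nhdsWithin_iff]
    constructor
    · have h1 := ((tendsto_const_nhds (α := ℕ) (x := (1 : ℝ))).sub hinv).neg
      norm_num at h1
      have h2 : (fun m : ℕ => -(b m)) = fun m : ℕ => 1 / ((m : ℝ) + 2) - 1 := by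
        funext m; simp only [hb]; ring
      rw [h2]
      convert h1 using 2
      norm_num
    · exact Eventually.of_forall (fun m => ⟨by linarith [(hbmem m).2], by linarith [(hbmem m).1]⟩)
  -- conclude
  have hlim0 : Tendsto (fun m => ∫ x in s m, G x) atTop (𝓝 0) := by
    have h1 := (hHone.comp hbtend).sub (hHnegone.comp hnbtend)
    rw [sub_zero] at h1
    simp only [Function.comp] at h1
    exact h1.congr (fun m => (hval m).symm)
  exact tendsto_nhds_unique htend1 hlim0
end

section
/- Let p ≥ 2 and let P_{n,p} denote the Legendre polynomial of degree n in p dimensions defined by the Rodrigues formula. Then for all natural numbers n ≠ m, ∫_{−1}^1 P_{n,p}(t) P_{m,p}(t) (1−t²)^{(p−3)/2} dt = 0. -/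
/-- The falling factorial `(a)_n = a(a−1)⋯(a−n+1)` of a real number `a`. -/
noncomputable def fallingFactorial (a : ℝ) (n : ℕ) : ℝ :=
  ∏ i ∈ Finset.range n, (a - i)

/-- The Legendre polynomial of degree `n` in `p` dimensions, defined on `(−1,1)` by
the Rodrigues formula
`P_{n,p}(t) = ((−1)^n / (2^n (n+(p−3)/2)_n)) (1−t²)^{(3−p)/2} (d/dt)^n (1−t²)^{n+(p−3)/2}`,
where the powers of `1−t²` are real powers. -/
noncomputable def legendreP (p n : ℕ) (t : ℝ) : ℝ :=
  ((-1 : ℝ) ^ n / (2 ^ n * fallingFactorial ((n : ℝ) + ((p : ℝ) - 3) / 2) n)) *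
    (1 - t ^ 2) ^ (((3 : ℝ) - (p : ℝ)) / 2) *
    iteratedDeriv n (fun s : ℝ => (1 - s ^ 2) ^ ((n : ℝ) + ((p : ℝ) - 3) / 2)) t

open MeasureTheory

/-- Polynomial appearing in the k-th derivative of `(1-s²)^α`. -/
private noncomputable def legQ (α : ℝ) : ℕ → Polynomial ℝ
  | 0 => 1
  | (k+1) => Polynomial.C (-2*(α - k)) * Polynomial.X * legQ α k
      + (1 - Polynomial.X^2) * (legQ α k).derivative

private lemma legQ_natDegree_le (α : ℝ) : ∀ k, (legQ α k).natDegree ≤ k := by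
  intro k
  induction k with
  | zero => simp [legQ]
  | succ k ih =>
    rw [legQ]
    refine (Polynomial.natDegree_add_le _ _).trans ?_
    have h1 : (Polynomial.C (-2*(α - (k:ℝ))) * Polynomial.X * legQ α k).natDegree ≤ k + 1 := by
      refine (Polynomial.natDegree_mul_le).trans ?_
      have := Polynomial.natDegree_C_mul_le (-2*(α - (k:ℝ))) (Polynomial.X : Polynomial ℝ)
      simp only [Polynomial.natDegree_X] at this
      omega
    have h2 : ((1 - Polynomial.X^2) * (legQ α k).derivative).natDegree ≤ k + 1 := by
      rcases Nat.eq_zero_or_pos k with hk | hk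
      · subst hk
        simp [legQ]
      · refine (Polynomial.natDegree_mul_le).trans ?_
        have hd : ((legQ α k).derivative).natDegree ≤ k - 1 :=
          (Polynomial.natDegree_derivative_le _).trans (by omega)
        have h12 : ((1 : Polynomial ℝ) - Polynomial.X^2).natDegree ≤ 2 := by
          refine (Polynomial.natDegree_sub_le _ _).trans ?_
          simp
        omega
    omega

/-- derivative of `(1-s²)^β * q(s)` inside `(-1,1)`. -/
private lemma hasDerivAt_rpow_mul_poly (β : ℝ) (q : Polynomial ℝ) {t : ℝ} (ht : t ∈ Set.Ioo (-1:ℝ) 1) :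
    HasDerivAt (fun s : ℝ => (1 - s^2) ^ β * q.eval s)
      ((1 - t^2) ^ (β - 1) *
        (Polynomial.C (-2*β) * Polynomial.X * q + (1 - Polynomial.X^2) * q.derivative).eval t)
      t := by
  have h0 : (0:ℝ) < 1 - t^2 := by
    nlinarith [ht.1, ht.2]
  have h1 : HasDerivAt (fun s : ℝ => 1 - s^2) (-(2*t)) t := by
    simpa using ((hasDerivAt_pow 2 t).const_sub 1)
  have h2 := h1.rpow_const (p := β) (Or.inl h0.ne')
  have h3 := (q.hasDerivAt t)
  have h4 := h2.mul h3
  refine h4.congr_deriv ?_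
  have hsplit : (1 - t^2) ^ β = (1 - t^2) ^ (β - 1) * (1 - t^2) := by
    have h := Real.rpow_add h0 (β-1) 1
    rw [sub_add_cancel, Real.rpow_one] at h
    exact h
  simp only [Polynomial.eval_add, Polynomial.eval_mul, Polynomial.eval_C, Polynomial.eval_X,
    Polynomial.eval_sub, Polynomial.eval_one, Polynomial.eval_pow]
  rw [hsplit]
  ring

private lemma iteratedDeriv_one_sub_sq_rpow (α : ℝ) :
    ∀ k, ∀ t ∈ Set.Ioo (-1:ℝ) 1,
    iteratedDeriv k (fun s : ℝ => (1 - s^2) ^ α) t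
      = (1 - t^2) ^ (α - k) * (legQ α k).eval t := by
  intro k
  induction k with
  | zero => intro t ht; simp [legQ]
  | succ k ih =>
    intro t ht
    rw [iteratedDeriv_succ]
    have hev : (iteratedDeriv k (fun s : ℝ => (1 - s^2) ^ α)) =ᶠ[nhds t]
        (fun s => (1 - s^2) ^ (α - k) * (legQ α k).eval s) :=
      Filter.eventuallyEq_of_mem (isOpen_Ioo.mem_nhds ht) ih
    rw [hev.deriv_eq, (hasDerivAt_rpow_mul_poly (α - k) (legQ α k) ht).deriv]
    have hexp : α - (k:ℝ) - 1 = α - ((k:ℕ)+1 : ℕ) := by push_cast; ring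
    rw [hexp, legQ]

private lemma rpow_one_sub_sq_le (γ : ℝ) {t : ℝ} (ht : t ∈ Set.Ioo (-1:ℝ) 1) :
    (1 - t^2) ^ γ ≤ (1 - t) ^ γ + (1 + t) ^ γ := by
  have ha : (0:ℝ) < 1 - t := by linarith [ht.2]
  have hb : (0:ℝ) < 1 + t := by linarith [ht.1]
  have hfact : (1 - t^2 : ℝ) = (1 - t) * (1 + t) := by ring
  rw [hfact, Real.mul_rpow ha.le hb.le]
  have hpa : 0 ≤ (1 - t) ^ γ := Real.rpow_nonneg ha.le γ
  have hpb : 0 ≤ (1 + t) ^ γ := Real.rpow_nonneg hb.le γ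
  rcases le_total t 0 with h | h
  · -- 1 - t ≥ 1
    rcases le_or_gt 0 γ with hγ | hγ
    · have : (1 + t) ^ γ ≤ 1 := Real.rpow_le_one hb.le (by linarith) hγ
      nlinarith
    · have : (1 - t) ^ γ ≤ 1 := Real.rpow_le_one_of_one_le_of_nonpos (by linarith) hγ.le
      nlinarith
  · rcases le_or_gt 0 γ with hγ | hγ
    · have : (1 - t) ^ γ ≤ 1 := Real.rpow_le_one ha.le (by linarith) hγ
      nlinarith
    · have : (1 + t) ^ γ ≤ 1 := Real.rpow_le_one_of_one_le_of_nonpos (by linarith) hγ.le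
      nlinarith

private lemma integrableOn_weight_mul (γ : ℝ) (hγ : -1 < γ) (g : ℝ → ℝ) (hg : Continuous g) :
    IntegrableOn (fun t => (1 - t^2) ^ γ * g t) (Set.Ioo (-1:ℝ) 1) volume := by
  -- integrability of the two one-sided weights
  have base : IntervalIntegrable (fun x : ℝ => x ^ γ) volume 0 2 :=
    intervalIntegral.intervalIntegrable_rpow' hγ
  have h1 : IntegrableOn (fun t : ℝ => (1 + t) ^ γ) (Set.Ioo (-1:ℝ) 1) volume := by
    have := base.comp_add_right 1
    norm_num at this
    rw [intervalIntegrable_iff, Set.uIoc_of_le (by norm_num : (-1:ℝ) ≤ 1)] at this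
    refine (this.mono_set Set.Ioo_subset_Ioc_self).congr_fun ?_ measurableSet_Ioo
    intro t _; simp [add_comm]
  have h2 : IntegrableOn (fun t : ℝ => (1 - t) ^ γ) (Set.Ioo (-1:ℝ) 1) volume := by
    have := (base.comp_sub_left 1).symm
    norm_num at this
    rw [intervalIntegrable_iff, Set.uIoc_of_le (by norm_num : (-1:ℝ) ≤ 1)] at this
    exact this.mono_set Set.Ioo_subset_Ioc_self
  -- bound for g
  obtain ⟨C, hC⟩ := (isCompact_Icc (a := (-1:ℝ)) (b := 1)).exists_bound_of_continuousOn
    hg.continuousOn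
  set C' := max C 0 with hC'
  have hCnn : 0 ≤ C' := le_max_right _ _
  have hmaj : IntegrableOn (fun t : ℝ => C' * ((1 - t) ^ γ + (1 + t) ^ γ))
      (Set.Ioo (-1:ℝ) 1) volume := ((h2.add h1).const_mul C')
  refine hmaj.mono' ?_ ?_
  · -- measurability
    have hcont : ContinuousOn (fun t : ℝ => (1 - t^2) ^ γ * g t) (Set.Ioo (-1:ℝ) 1) := by
      refine ContinuousOn.mul ?_ hg.continuousOn
      refine ContinuousOn.rpow_const ?_ ?_
      · fun_prop
      · intro t ht
        left
        nlinarith [ht.1, ht.2]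
    exact hcont.aestronglyMeasurable measurableSet_Ioo
  · refine (ae_restrict_mem measurableSet_Ioo).mono fun t ht => ?_
    have h0 : (0:ℝ) < 1 - t^2 := by nlinarith [ht.1, ht.2]
    have hb1 : ‖(1 - t^2) ^ γ * g t‖ ≤ (1 - t^2) ^ γ * C' := by
      rw [norm_mul, Real.norm_of_nonneg (Real.rpow_nonneg h0.le γ)]
      refine mul_le_mul_of_nonneg_left ?_ (by positivity)
      exact ((hC t (Set.Ioo_subset_Icc_self ht)).trans (le_max_left _ _))
    refine hb1.trans ?_
    have := rpow_one_sub_sq_le γ ht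
    nlinarith [Real.rpow_nonneg h0.le γ]

private lemma ibp_step (α : ℝ) (k : ℕ) (hβ : 0 < α - k) (r : Polynomial ℝ) :
    ∫ t in Set.Ioo (-1:ℝ) 1,
        r.eval t * iteratedDeriv (k+1) (fun s : ℝ => (1 - s^2) ^ α) t
      = - ∫ t in Set.Ioo (-1:ℝ) 1,
        (Polynomial.derivative r).eval t * iteratedDeriv k (fun s : ℝ => (1 - s^2) ^ α) t := by
  set β := α - (k:ℝ) with hβdef
  set q := legQ α k with hq
  set G : ℝ → ℝ := fun t => (1 - t^2) ^ β * (r * q).eval t with hG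
  set g : ℝ → ℝ := fun t =>
      (Polynomial.derivative r).eval t * ((1 - t^2) ^ β * q.eval t)
    + r.eval t * ((1 - t^2) ^ (β - 1) * (legQ α (k+1)).eval t) with hg
  have hGderiv : ∀ t ∈ Set.Ioo (-1:ℝ) 1, HasDerivAt G (g t) t := by
    intro t ht
    have h0 : (0:ℝ) < 1 - t^2 := by nlinarith [ht.1, ht.2]
    have h := hasDerivAt_rpow_mul_poly β (r * q) ht
    convert h using 1
    have hsplit : (1 - t^2) ^ β = (1 - t^2) ^ (β - 1) * (1 - t^2) := by
      have h := Real.rpow_add h0 (β-1) 1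
      rw [sub_add_cancel, Real.rpow_one] at h
      exact h
    simp only [hg, legQ, Polynomial.derivative_mul, Polynomial.eval_add, Polynomial.eval_mul,
      Polynomial.eval_C, Polynomial.eval_X, Polynomial.eval_sub, Polynomial.eval_one,
      Polynomial.eval_pow, hsplit, ← hq, ← hβdef]
    ring
  have hGcont : ContinuousOn G (Set.Icc (-1:ℝ) 1) := by
    refine ContinuousOn.mul ?_ (Polynomial.continuous _).continuousOn
    refine ContinuousOn.rpow_const (by fun_prop) fun t _ => Or.inr hβ.le
  have int1 : IntegrableOn
      (fun t => (Polynomial.derivative r).eval t * ((1 - t^2) ^ β * q.eval t))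
      (Set.Ioo (-1:ℝ) 1) volume := by
    refine (integrableOn_weight_mul β (by linarith)
      (fun t => (Polynomial.derivative r).eval t * q.eval t) (by fun_prop)).congr_fun
      ?_ measurableSet_Ioo
    intro t _; ring
  have int2 : IntegrableOn
      (fun t => r.eval t * ((1 - t^2) ^ (β - 1) * (legQ α (k+1)).eval t))
      (Set.Ioo (-1:ℝ) 1) volume := by
    refine (integrableOn_weight_mul (β - 1) (by linarith)
      (fun t => r.eval t * (legQ α (k+1)).eval t) (by fun_prop)).congr_fun
      ?_ measurableSet_Ioo
    intro t _; ring
  have hgint : IntervalIntegrable g volume (-1) 1 := by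
    rw [intervalIntegrable_iff, Set.uIoc_of_le (by norm_num : (-1:ℝ) ≤ 1)]
    rw [integrableOn_Ioc_iff_integrableOn_Ioo]
    exact int1.add int2
  have key : ∫ t in (-1:ℝ)..1, g t = G 1 - G (-1) :=
    intervalIntegral.integral_eq_sub_of_hasDerivAt_of_le (by norm_num) hGcont hGderiv hgint
  have hG1 : G 1 = 0 := by simp [hG, Real.zero_rpow hβ.ne']
  have hGm1 : G (-1) = 0 := by
    simp only [hG]
    norm_num [Real.zero_rpow hβ.ne']
  rw [hG1, hGm1, sub_zero, intervalIntegral.integral_of_le (by norm_num : (-1:ℝ) ≤ 1),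
    MeasureTheory.integral_Ioc_eq_integral_Ioo] at key
  have hsum : (∫ t in Set.Ioo (-1:ℝ) 1,
        (Polynomial.derivative r).eval t * ((1 - t^2) ^ β * q.eval t))
      + (∫ t in Set.Ioo (-1:ℝ) 1,
        r.eval t * ((1 - t^2) ^ (β - 1) * (legQ α (k+1)).eval t)) = 0 := by
    rw [← MeasureTheory.integral_add int1 int2]
    exact key
  have e1 : ∫ t in Set.Ioo (-1:ℝ) 1,
        r.eval t * iteratedDeriv (k+1) (fun s : ℝ => (1 - s^2) ^ α) t
      = ∫ t in Set.Ioo (-1:ℝ) 1,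
        r.eval t * ((1 - t^2) ^ (β - 1) * (legQ α (k+1)).eval t) := by
    refine MeasureTheory.setIntegral_congr_fun measurableSet_Ioo fun t ht => ?_
    rw [iteratedDeriv_one_sub_sq_rpow α (k+1) t ht]
    have : α - ((k:ℕ)+1 : ℕ) = β - 1 := by push_cast; ring
    rw [this]
  have e2 : ∫ t in Set.Ioo (-1:ℝ) 1,
        (Polynomial.derivative r).eval t * iteratedDeriv k (fun s : ℝ => (1 - s^2) ^ α) t
      = ∫ t in Set.Ioo (-1:ℝ) 1,
        (Polynomial.derivative r).eval t * ((1 - t^2) ^ β * q.eval t) := by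
    refine MeasureTheory.setIntegral_congr_fun measurableSet_Ioo fun t ht => ?_
    rw [iteratedDeriv_one_sub_sq_rpow α k t ht]
  rw [e1, e2]
  linarith [hsum]

private lemma ibp_chain (α : ℝ) (m : ℕ) (hα : ∀ k : ℕ, k < m → 0 < α - k) :
    ∀ k, k ≤ m → ∀ r : Polynomial ℝ,
    ∫ t in Set.Ioo (-1:ℝ) 1, r.eval t * iteratedDeriv m (fun s : ℝ => (1 - s^2) ^ α) t
      = (-1:ℝ)^k * ∫ t in Set.Ioo (-1:ℝ) 1,
          ((Polynomial.derivative)^[k] r).eval t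
            * iteratedDeriv (m - k) (fun s : ℝ => (1 - s^2) ^ α) t := by
  intro k
  induction k with
  | zero => intro _ r; simp
  | succ k ih =>
    intro hk r
    rw [ih (by omega) r]
    have hmk : m - k = (m - (k+1)) + 1 := by omega
    rw [hmk, ibp_step α (m - (k+1)) (hα _ (by omega)) ((Polynomial.derivative)^[k] r)]
    rw [Function.iterate_succ_apply']
    ring

private lemma ortho_lt (p : ℕ) (hp : 2 ≤ p) (n m : ℕ) (hnm : n < m) :
    ∫ t in Set.Ioo (-1 : ℝ) 1,
      legendreP p n t * legendreP p m t * (1 - t ^ 2) ^ (((p : ℝ) - 3) / 2) = 0 := by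
  have hp' : (2:ℝ) ≤ (p:ℝ) := by exact_mod_cast hp
  set αn : ℝ := (n : ℝ) + ((p : ℝ) - 3) / 2 with hαn
  set αm : ℝ := (m : ℝ) + ((p : ℝ) - 3) / 2 with hαm
  set cn : ℝ := (-1 : ℝ) ^ n / (2 ^ n * fallingFactorial αn n) with hcn
  set cm : ℝ := (-1 : ℝ) ^ m / (2 ^ m * fallingFactorial αm m) with hcm
  have hstep : ∀ t ∈ Set.Ioo (-1:ℝ) 1,
      legendreP p n t * legendreP p m t * (1 - t ^ 2) ^ (((p : ℝ) - 3) / 2)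
        = (cn * cm) * ((legQ αn n).eval t
            * iteratedDeriv m (fun s : ℝ => (1 - s ^ 2) ^ αm) t) := by
    intro t ht
    have h0 : (0:ℝ) < 1 - t^2 := by nlinarith [ht.1, ht.2]
    have hone : (1 - t ^ 2) ^ (((3 : ℝ) - (p : ℝ)) / 2)
        * (1 - t ^ 2) ^ (((p : ℝ) - 3) / 2) = 1 := by
      rw [← Real.rpow_add h0, show ((3:ℝ) - (p:ℝ))/2 + ((p:ℝ)-3)/2 = 0 by ring,
        Real.rpow_zero]
    have hn : iteratedDeriv n (fun s : ℝ => (1 - s ^ 2) ^ αn) t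
        = (1 - t^2) ^ (((p : ℝ) - 3) / 2) * (legQ αn n).eval t := by
      have := iteratedDeriv_one_sub_sq_rpow αn n t ht
      simpa only [show αn - (n:ℝ) = ((p : ℝ) - 3) / 2 by rw [hαn]; ring]
        using this
    simp only [legendreP, ← hαn, ← hαm, ← hcn, ← hcm, hn]
    linear_combination (cn * cm * Polynomial.eval t (legQ αn n) *
      iteratedDeriv m (fun s : ℝ => (1 - s ^ 2) ^ αm) t *
      ((1 - t ^ 2) ^ (((3:ℝ) - (p:ℝ)) / 2) * (1 - t ^ 2) ^ (((p:ℝ) - 3) / 2) + 1)) * hone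
  rw [MeasureTheory.setIntegral_congr_fun measurableSet_Ioo hstep,
    MeasureTheory.integral_const_mul]
  have hα : ∀ k : ℕ, k < m → 0 < αm - k := by
    intro k hk
    have hk' : (k:ℝ) + 1 ≤ (m:ℝ) := by exact_mod_cast hk
    rw [hαm]
    linarith
  have hz := ibp_chain αm m hα (n+1) (by omega) (legQ αn n)
  have hzero : (Polynomial.derivative)^[n+1] (legQ αn n) = 0 :=
    Polynomial.iterate_derivative_eq_zero
      (lt_of_le_of_lt (legQ_natDegree_le αn n) (Nat.lt_succ_self n))
  rw [hzero] at hz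
  simp only [Polynomial.eval_zero, zero_mul, MeasureTheory.integral_zero, mul_zero] at hz
  rw [hz, mul_zero]

/-- Legendre polynomials in `p` dimensions of different degrees are
orthogonal on `(−1,1)` with respect to the weight `(1−t²)^{(p−3)/2}`. -/
theorem legendreP_orthogonal
    (p : ℕ) (hp : 2 ≤ p) (n m : ℕ) (hnm : n ≠ m) :
    ∫ t in Set.Ioo (-1 : ℝ) 1,
      legendreP p n t * legendreP p m t * (1 - t ^ 2) ^ (((p : ℝ) - 3) / 2) = 0 := by
  rcases hnm.lt_or_gt with h | h
  · exact ortho_lt p hp n m h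
  · rw [← ortho_lt p hp m n h]
    exact MeasureTheory.setIntegral_congr_fun measurableSet_Ioo fun t _ => by ring
end

section
/- Let p ≥ 2 and let P_{n,p} denote the Legendre polynomial of degree n in p dimensions defined by the Rodrigues formula. Then P_{n,p} satisfies the differential equation (1−t²)·P″_{n,p}(t) + (1−p)·t·P′_{n,p}(t) + n(n+p−2)·P_{n,p}(t) = 0 for all t ∈ (−1,1). -/
open scoped ContDiff

noncomputable def LegAux.F (ν : ℝ) (k : ℕ) : ℝ → ℝ :=
  iteratedDeriv k (fun s : ℝ => (1 - s ^ 2) ^ ν)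

namespace LegAux

lemma hasDerivAt_base (s : ℝ) : HasDerivAt (fun y : ℝ => 1 - y ^ 2) (-(2 * s)) s := by
  simpa using ((hasDerivAt_pow 2 s).const_sub 1)

lemma F_contDiffOn (ν : ℝ) (k : ℕ) :
    ContDiffOn ℝ ∞ (F ν k) (Set.Ioo (-1 : ℝ) 1) := by
  induction k with
  | zero =>
    rw [F, iteratedDeriv_zero]
    intro t ht
    have h1 : (1 : ℝ) - t ^ 2 ≠ 0 := by nlinarith [ht.1, ht.2]
    exact (((contDiffAt_const (c := (1:ℝ))).sub (contDiffAt_id.pow 2)).rpow_const_of_ne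
      h1).contDiffWithinAt
  | succ k ih =>
    rw [F, iteratedDeriv_succ]
    exact ((contDiffOn_infty_iff_deriv_of_isOpen isOpen_Ioo).1 ih).2

lemma F_hasDerivAt (ν : ℝ) (k : ℕ) {t : ℝ} (ht : t ∈ Set.Ioo (-1 : ℝ) 1) :
    HasDerivAt (F ν k) (F ν (k + 1) t) t := by
  have h := ((F_contDiffOn ν k).differentiableOn (by simp)) t ht
  have h2 := h.differentiableAt (isOpen_Ioo.mem_nhds ht)
  have e : F ν (k + 1) t = deriv (F ν k) t := by
    rw [F, F, iteratedDeriv_succ]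
  rw [e]
  exact h2.hasDerivAt

lemma eq_zero_of_deriv {G : ℝ → ℝ} {d t : ℝ} (ht : t ∈ Set.Ioo (-1 : ℝ) 1)
    (h0 : ∀ s ∈ Set.Ioo (-1 : ℝ) 1, G s = 0) (hG : HasDerivAt G d t) : d = 0 := by
  have h1 : G =ᶠ[nhds t] fun _ => 0 := by
    filter_upwards [isOpen_Ioo.mem_nhds ht] with s hs using h0 s hs
  exact hG.unique ((hasDerivAt_const t (0 : ℝ)).congr_of_eventuallyEq h1)

lemma base_id (ν : ℝ) : ∀ t ∈ Set.Ioo (-1 : ℝ) 1,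
    (1 - t ^ 2) * F ν 1 t + 2 * ν * t * F ν 0 t = 0 := by
  intro t ht
  have hx : (0 : ℝ) < 1 - t ^ 2 := by nlinarith [ht.1, ht.2]
  have hf : HasDerivAt (fun s : ℝ => (1 - s ^ 2) ^ ν)
      (-(2 * t) * ν * (1 - t ^ 2) ^ (ν - 1)) t :=
    (hasDerivAt_base t).rpow_const (Or.inl hx.ne')
  have hF1 : F ν 1 t = -(2 * t) * ν * (1 - t ^ 2) ^ (ν - 1) := by
    rw [F, iteratedDeriv_one]; exact hf.deriv
  have hF0 : F ν 0 t = (1 - t ^ 2) ^ ν := by rw [F, iteratedDeriv_zero]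
  have h2 : (1 - t ^ 2) * (1 - t ^ 2) ^ (ν - 1) = (1 - t ^ 2) ^ ν := by
    rw [Real.rpow_sub hx, Real.rpow_one]; field_simp
  rw [hF1, hF0]
  linear_combination (-(2 * ν * t)) * h2

lemma main_id (ν : ℝ) (k : ℕ) : ∀ t ∈ Set.Ioo (-1 : ℝ) 1,
    (1 - t ^ 2) * F ν (k + 1 + 1) t + (2 * ν - 2 * ((k : ℝ) + 1)) * t * F ν (k + 1) t
      + ((k : ℝ) + 1) * (2 * ν - (k : ℝ)) * F ν k t = 0 := by
  induction k with
  | zero =>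
    intro t ht
    have hG : HasDerivAt
        (fun s : ℝ => (1 - s ^ 2) * F ν 1 s + 2 * ν * s * F ν 0 s)
        ((-(2 * t) * F ν 1 t + (1 - t ^ 2) * F ν (1 + 1) t)
          + ((2 * ν * 1) * F ν 0 t + (2 * ν * t) * F ν (0 + 1) t)) t := by
      exact ((hasDerivAt_base t).mul (F_hasDerivAt ν 1 ht)).add
        (((hasDerivAt_id t).const_mul (2 * ν)).mul (F_hasDerivAt ν 0 ht))
    have hd := eq_zero_of_deriv ht (base_id ν) hG
    push_cast
    linear_combination hd
  | succ k ih =>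
    intro t ht
    have hG : HasDerivAt
        (fun s : ℝ => (1 - s ^ 2) * F ν (k + 1 + 1) s
          + (2 * ν - 2 * ((k : ℝ) + 1)) * s * F ν (k + 1) s
          + ((k : ℝ) + 1) * (2 * ν - (k : ℝ)) * F ν k s)
        (((-(2 * t) * F ν (k + 1 + 1) t + (1 - t ^ 2) * F ν (k + 1 + 1 + 1) t)
          + (((2 * ν - 2 * ((k : ℝ) + 1)) * 1) * F ν (k + 1) t
            + ((2 * ν - 2 * ((k : ℝ) + 1)) * t) * F ν (k + 1 + 1) t))
          + ((k : ℝ) + 1) * (2 * ν - (k : ℝ)) * F ν (k + 1) t) t := by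
      exact (((hasDerivAt_base t).mul (F_hasDerivAt ν (k + 1 + 1) ht)).add
        (((hasDerivAt_id t).const_mul (2 * ν - 2 * ((k : ℝ) + 1))).mul
          (F_hasDerivAt ν (k + 1) ht))).add
        ((F_hasDerivAt ν k ht).const_mul (((k : ℝ) + 1) * (2 * ν - (k : ℝ))))
    have hd := eq_zero_of_deriv ht ih hG
    push_cast
    have e3 : k + 1 + 1 + 1 = k + 2 + 1 := by ring
    rw [show (k + 1 + 1 + 1 : ℕ) = (k + 1) + 1 + 1 from rfl] at hd ⊢
    linear_combination hd

end LegAux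

namespace LegAux

lemma final (q c ν β : ℝ) (n : ℕ) {t : ℝ} (ht : t ∈ Set.Ioo (-1 : ℝ) 1)
    (hν : ν = (n : ℝ) + (q - 3) / 2) (hβ : β = (3 - q) / 2) :
    (1 - t ^ 2) * deriv (deriv (fun s : ℝ => c * (1 - s ^ 2) ^ β * F ν n s)) t
      + (1 - q) * t * deriv (fun s : ℝ => c * (1 - s ^ 2) ^ β * F ν n s) t
      + (n : ℝ) * ((n : ℝ) + q - 2) * (c * (1 - t ^ 2) ^ β * F ν n t) = 0 := by
  have hx : (0 : ℝ) < 1 - t ^ 2 := by nlinarith [ht.1, ht.2]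
  have hne : ∀ s ∈ Set.Ioo (-1 : ℝ) 1, (1 : ℝ) - s ^ 2 ≠ 0 := by
    intro s hs; nlinarith [hs.1, hs.2]
  have hQ : ∀ s ∈ Set.Ioo (-1 : ℝ) 1,
      HasDerivAt (fun y : ℝ => c * (1 - y ^ 2) ^ β * F ν n y)
        (c * (-(2 * s) * β * (1 - s ^ 2) ^ (β - 1) * F ν n s
          + (1 - s ^ 2) ^ β * F ν (n + 1) s)) s := by
    intro s hs
    have hu : HasDerivAt (fun y : ℝ => (1 - y ^ 2) ^ β)
        (-(2 * s) * β * (1 - s ^ 2) ^ (β - 1)) s :=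
      (hasDerivAt_base s).rpow_const (Or.inl (hne s hs))
    have h := (hu.const_mul c).fun_mul (F_hasDerivAt ν n hs)
    exact h.congr_deriv (by ring)
  have hev : deriv (fun y : ℝ => c * (1 - y ^ 2) ^ β * F ν n y) =ᶠ[nhds t]
      (fun s : ℝ => c * (-(2 * s) * β * (1 - s ^ 2) ^ (β - 1) * F ν n s
        + (1 - s ^ 2) ^ β * F ν (n + 1) s)) := by
    filter_upwards [isOpen_Ioo.mem_nhds ht] with s hs using (hQ s hs).deriv
  have hd2 := hev.deriv_eq
  have hR : HasDerivAt
      (fun s : ℝ => c * (-(2 * s) * β * (1 - s ^ 2) ^ (β - 1) * F ν n s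
        + (1 - s ^ 2) ^ β * F ν (n + 1) s))
      (c * (-2 * β * (1 - t ^ 2) ^ (β - 1) * F ν n t
        + 4 * t ^ 2 * β * (β - 1) * (1 - t ^ 2) ^ (β - 1 - 1) * F ν n t
        - 4 * t * β * (1 - t ^ 2) ^ (β - 1) * F ν (n + 1) t
        + (1 - t ^ 2) ^ β * F ν (n + 1 + 1) t)) t := by
    have hu1 : HasDerivAt (fun y : ℝ => (1 - y ^ 2) ^ (β - 1))
        (-(2 * t) * (β - 1) * (1 - t ^ 2) ^ (β - 1 - 1)) t :=
      (hasDerivAt_base t).rpow_const (Or.inl (hne t ht))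
    have hu : HasDerivAt (fun y : ℝ => (1 - y ^ 2) ^ β)
        (-(2 * t) * β * (1 - t ^ 2) ^ (β - 1)) t :=
      (hasDerivAt_base t).rpow_const (Or.inl (hne t ht))
    have hlin : HasDerivAt (fun y : ℝ => -(2 * y)) (-(2 * 1)) t :=
      ((hasDerivAt_id t).const_mul 2).neg
    have hA := ((hlin.mul_const β).fun_mul hu1).fun_mul (F_hasDerivAt ν n ht)
    have hB := hu.fun_mul (F_hasDerivAt ν (n + 1) ht)
    have h := (hA.add hB).const_mul c
    exact h.congr_deriv (by ring)
  rw [hd2, hR.deriv, (hQ t ht).deriv]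
  have he1 : (1 - t ^ 2) ^ (β - 1) * (1 - t ^ 2) = (1 - t ^ 2) ^ β := by
    rw [Real.rpow_sub hx, Real.rpow_one]; field_simp
  have he2 : (1 - t ^ 2) ^ (β - 1 - 1) * (1 - t ^ 2) = (1 - t ^ 2) ^ (β - 1) := by
    rw [Real.rpow_sub hx (β - 1) 1, Real.rpow_one]; field_simp
  have key := main_id ν n t ht
  subst hν hβ
  linear_combination (c * (1 - t ^ 2) ^ ((3 - q) / 2)) * key
    + (c * (-2 * ((3 - q) / 2) * F ((n : ℝ) + (q - 3) / 2) n t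
        - 4 * ((3 - q) / 2) * t * F ((n : ℝ) + (q - 3) / 2) (n + 1) t)) * he1
    + (c * (4 * t ^ 2 * ((3 - q) / 2) * ((3 - q) / 2 - 1)
        * F ((n : ℝ) + (q - 3) / 2) n t)) * he2

end LegAux

/-- The Legendre polynomial `P_{n,p}` in `p` dimensions satisfies the
Legendre differential equation
`(1−t²) P″(t) + (1−p) t P′(t) + n(n+p−2) P(t) = 0` on `(−1,1)`. -/
theorem legendreP_differential_equation
    (p : ℕ) (hp : 2 ≤ p) (n : ℕ) (t : ℝ) (ht : t ∈ Set.Ioo (-1 : ℝ) 1) :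
    (1 - t ^ 2) * deriv (deriv (legendreP p n)) t
        + (1 - (p : ℝ)) * t * deriv (legendreP p n) t
        + (n : ℝ) * ((n : ℝ) + (p : ℝ) - 2) * legendreP p n t = 0 := by
  have e : legendreP p n = fun s : ℝ =>
      ((-1 : ℝ) ^ n / (2 ^ n * fallingFactorial ((n : ℝ) + ((p : ℝ) - 3) / 2) n)) *
        (1 - s ^ 2) ^ (((3 : ℝ) - (p : ℝ)) / 2) *
        LegAux.F ((n : ℝ) + ((p : ℝ) - 3) / 2) n s := rfl
  rw [e]
  exact LegAux.final (p : ℝ) _ _ _ n ht rfl rfl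
end

section
/- Let p ≥ 2 and let P_{n,p} denote the Legendre polynomial of degree n in p dimensions defined by the Rodrigues formula. Then for every n ≥ 1 and all t ∈ (−1,1), (n+p−2)·P_{n+1,p}(t) − (2n+p−2)·t·P_{n,p}(t) + n·P_{n−1,p}(t) = 0. -/
open Finset

lemma ff_zero (x : ℝ) : fallingFactorial x 0 = 1 := by simp [fallingFactorial]

lemma ff_one (x : ℝ) : fallingFactorial x 1 = x := by simp [fallingFactorial]

lemma ff_succ (x : ℝ) (k : ℕ) :
    fallingFactorial x (k + 1) = fallingFactorial x k * (x - k) := by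
  simp [fallingFactorial, Finset.prod_range_succ]

lemma ff_succ_left (x : ℝ) (k : ℕ) :
    fallingFactorial (x + 1) (k + 1) = (x + 1) * fallingFactorial x k := by
  rw [fallingFactorial, Finset.prod_range_succ']
  rw [fallingFactorial]
  have h1 : ∀ i ∈ Finset.range k, (x + 1 - ((i : ℕ) + 1 : ℕ)) = x - (i : ℕ) := by
    intro i _; push_cast; ring
  rw [Finset.prod_congr rfl h1]
  push_cast
  ring

noncomputable def ee (β : ℝ) (m k : ℕ) : ℝ :=
  (m.choose k : ℝ) * fallingFactorial ((m : ℝ) + β) k * fallingFactorial ((m : ℝ) + β) (m - k)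

lemma ee_expand (β : ℝ) (m k l : ℕ) (h : m = k + l) :
    ee β m k = (m.choose k : ℝ) * fallingFactorial ((m : ℝ) + β) k *
      fallingFactorial ((m : ℝ) + β) l := by
  subst h
  rw [ee, Nat.add_sub_cancel_left]

lemma ee_of_lt (β : ℝ) {m k : ℕ} (h : m < k) : ee β m k = 0 := by
  simp [ee, Nat.choose_eq_zero_of_lt h]

lemma key (β : ℝ) (m j : ℕ) (hj : j ≤ m + 2) :
    ((m : ℝ) + 2 + 2 * β) * ee β (m + 2) j
      - (2 * (m : ℝ) + 2 * β + 3) * ((m : ℝ) + 2 + β) *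
          (ee β (m + 1) j + (if j = 0 then 0 else ee β (m + 1) (j - 1)))
      + ((m : ℝ) + 1) * ((m : ℝ) + 2 + β) * ((m : ℝ) + 1 + β) *
          (ee β m j - 2 * (if j = 0 then 0 else ee β m (j - 1))
            + (if j ≤ 1 then 0 else ee β m (j - 2))) = 0 := by
  rcases j with _ | _ | i
  · -- j = 0
    simp only [reduceIte, show ((0:ℕ) ≤ 1) = True from by simp, if_true]
    have a1 : ee β (m + 1) 0 = ((m : ℝ) + 1 + β) * ee β m 0 := by
      rw [ee_expand β (m+1) 0 (m+1) (by omega), ee_expand β m 0 m (by omega)]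
      simp only [Nat.choose_zero_right, Nat.cast_one, ff_zero, one_mul]
      have h : ((m + 1 : ℕ) : ℝ) + β = ((m : ℝ) + β) + 1 := by push_cast; ring
      rw [h, ff_succ_left]
      ring
    have a2 : ee β (m + 2) 0 = ((m : ℝ) + 2 + β) * ee β (m + 1) 0 := by
      rw [ee_expand β (m+2) 0 (m+2) (by omega), ee_expand β (m+1) 0 (m+1) (by omega)]
      simp only [Nat.choose_zero_right, Nat.cast_one, ff_zero, one_mul]
      have h : ((m + 2 : ℕ) : ℝ) + β = (((m + 1 : ℕ) : ℝ) + β) + 1 := by push_cast; ring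
      rw [show m + 2 = (m + 1) + 1 from rfl, h, ff_succ_left]
      push_cast
      ring
    rw [a2, a1]
    ring
  · -- j = 1
    simp only [reduceIte, show ((1:ℕ) ≤ 1) = True from by simp, if_true, Nat.sub_self]
    rcases m with _ | r
    · norm_num [ee, fallingFactorial, Finset.prod_range_succ]
      ring
    · simp only [show r + 1 + 2 = r + 3 from by omega, show r + 1 + 1 = r + 2 from by omega]
      have b1 : ee β (r+1) 0 = fallingFactorial ((r:ℝ)+1+β) r * (β+1) := by
        rw [ee_expand β (r+1) 0 (r+1) (by omega)]
        simp only [Nat.choose_zero_right, Nat.cast_one, ff_zero, one_mul]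
        rw [show ((r+1:ℕ):ℝ)+β = ((r:ℝ)+1+β) from by push_cast; ring, ff_succ]
        push_cast; ring
      have b2 : ee β (r+1) 1 = ((r:ℝ)+1) * (((r:ℝ)+1+β) * fallingFactorial ((r:ℝ)+1+β) r) := by
        rw [ee_expand β (r+1) 1 r (by omega), Nat.choose_one_right, ff_one,
          show ((r+1:ℕ):ℝ)+β = ((r:ℝ)+1+β) from by push_cast; ring]
        push_cast; ring
      have b3 : ee β (r+2) 0 = ((r:ℝ)+2+β) * (fallingFactorial ((r:ℝ)+1+β) r * (β+1)) := by
        rw [ee_expand β (r+2) 0 (r+2) (by omega)]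
        simp only [Nat.choose_zero_right, Nat.cast_one, ff_zero, one_mul]
        rw [show ((r+2:ℕ):ℝ)+β = ((r:ℝ)+1+β)+1 from by push_cast; ring,
          show r+2 = (r+1)+1 from rfl, ff_succ_left, ff_succ]
        push_cast; ring
      have b4 : ee β (r+2) 1 = ((r:ℝ)+2) * (((r:ℝ)+2+β) * (((r:ℝ)+2+β) * fallingFactorial ((r:ℝ)+1+β) r)) := by
        rw [ee_expand β (r+2) 1 (r+1) (by omega), Nat.choose_one_right, ff_one,
          show ((r+2:ℕ):ℝ)+β = ((r:ℝ)+1+β)+1 from by push_cast; ring, ff_succ_left]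
        push_cast; ring
      have b5 : ee β (r+3) 1 = ((r:ℝ)+3) * (((r:ℝ)+3+β) * (((r:ℝ)+3+β) * (((r:ℝ)+2+β) * fallingFactorial ((r:ℝ)+1+β) r))) := by
        rw [ee_expand β (r+3) 1 (r+2) (by omega), Nat.choose_one_right, ff_one,
          show ((r+3:ℕ):ℝ)+β = ((r:ℝ)+2+β)+1 from by push_cast; ring,
          show r+2 = (r+1)+1 from rfl, ff_succ_left,
          show (r:ℝ)+2+β = ((r:ℝ)+1+β)+1 from by ring, ff_succ_left]
        push_cast; ring
      rw [b1, b2, b3, b4, b5]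
      push_cast
      ring
  · -- j = i + 2
    simp only [if_neg (by omega : ¬ i + 2 = 0), if_neg (by omega : ¬ i + 2 ≤ 1),
      show i + 2 - 1 = i + 1 from by omega, show i + 2 - 2 = i from by omega]
    have him : i ≤ m := by omega
    rcases eq_or_lt_of_le him with he | hlt
    · -- i = m : top edge
      subst he
      have c1 : ee β i i = fallingFactorial ((i:ℝ)+β) i := by
        rw [ee_expand β i i 0 (by omega), Nat.choose_self, ff_zero]
        push_cast; ring
      have c2 : ee β (i+1) (i+1) = ((i:ℝ)+1+β) * fallingFactorial ((i:ℝ)+β) i := by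
        rw [ee_expand β (i+1) (i+1) 0 (by omega), Nat.choose_self, ff_zero,
          show ((i+1:ℕ):ℝ)+β = ((i:ℝ)+β)+1 from by push_cast; ring, ff_succ_left]
        push_cast; ring
      have c3 : ee β (i+2) (i+2) = ((i:ℝ)+2+β) * (((i:ℝ)+1+β) * fallingFactorial ((i:ℝ)+β) i) := by
        rw [ee_expand β (i+2) (i+2) 0 (by omega), Nat.choose_self, ff_zero,
          show ((i+2:ℕ):ℝ)+β = (((i:ℝ)+β)+1)+1 from by push_cast; ring,
          show i+2 = (i+1)+1 from rfl, ff_succ_left, ff_succ_left]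
        push_cast; ring
      rw [c1, c2, c3, ee_of_lt β (by omega : i < i + 2), ee_of_lt β (by omega : i < i + 1),
        ee_of_lt β (by omega : i + 1 < i + 2)]
      push_cast
      ring
    · rcases eq_or_lt_of_le (show i + 1 ≤ m by omega) with he | hlt2
      · -- i + 1 = m : second edge
        subst he
        have d1 : ee β (i+1) i = ((i:ℝ)+1) * fallingFactorial ((i:ℝ)+1+β) i * ((i:ℝ)+1+β) := by
          rw [ee_expand β (i+1) i 1 (by omega), Nat.choose_succ_self_right, ff_one,
            show ((i+1:ℕ):ℝ)+β = ((i:ℝ)+1+β) from by push_cast; ring]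
          push_cast; ring
        have d2 : ee β (i+1) (i+1) = fallingFactorial ((i:ℝ)+1+β) i * (β+1) := by
          rw [ee_expand β (i+1) (i+1) 0 (by omega), Nat.choose_self, ff_zero,
            show ((i+1:ℕ):ℝ)+β = ((i:ℝ)+1+β) from by push_cast; ring, ff_succ]
          push_cast; ring
        have d3 : ee β (i+2) (i+1) = ((i:ℝ)+2) * (((i:ℝ)+2+β) * fallingFactorial ((i:ℝ)+1+β) i) * ((i:ℝ)+2+β) := by
          rw [ee_expand β (i+2) (i+1) 1 (by omega), Nat.choose_succ_self_right, ff_one,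
            show ((i+2:ℕ):ℝ)+β = ((i:ℝ)+1+β)+1 from by push_cast; ring, ff_succ_left]
          push_cast; ring
        have d4 : ee β (i+2) (i+2) = ((i:ℝ)+2+β) * (fallingFactorial ((i:ℝ)+1+β) i * (β+1)) := by
          rw [ee_expand β (i+2) (i+2) 0 (by omega), Nat.choose_self, ff_zero,
            show ((i+2:ℕ):ℝ)+β = ((i:ℝ)+1+β)+1 from by push_cast; ring,
            show i+2 = (i+1)+1 from rfl, ff_succ_left, ff_succ]
          push_cast; ring
        have d5 : ee β (i+3) (i+2) = ((i:ℝ)+3) * (((i:ℝ)+3+β) * (((i:ℝ)+2+β) * fallingFactorial ((i:ℝ)+1+β) i)) * ((i:ℝ)+3+β) := by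
          rw [ee_expand β (i+3) (i+2) 1 (by omega), Nat.choose_succ_self_right, ff_one,
            show ((i+3:ℕ):ℝ)+β = ((i:ℝ)+2+β)+1 from by push_cast; ring,
            show i+2 = (i+1)+1 from rfl, ff_succ_left,
            show (i:ℝ)+2+β = ((i:ℝ)+1+β)+1 from by ring, ff_succ_left]
          push_cast; ring
        rw [show i+1+2 = i+3 from by omega, show i+1+1 = i+2 from by omega,
          d1, d2, d3, d4, d5, ee_of_lt β (by omega : i + 1 < i + 2)]
        push_cast
        ring
      · -- generic case
        obtain ⟨s, rfl⟩ : ∃ s, m = i + 2 + s := ⟨m - (i+2), by omega⟩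
        rw [show i+2+s+2 = i+s+4 from by omega, show i+2+s+1 = i+s+3 from by omega,
          show i+2+s = i+s+2 from by omega]
        rw [ee_expand β (i+s+4) (i+2) (s+2) (by omega),
          ee_expand β (i+s+3) (i+2) (s+1) (by omega),
          ee_expand β (i+s+3) (i+1) (s+2) (by omega),
          ee_expand β (i+s+2) (i+2) s (by omega),
          ee_expand β (i+s+2) (i+1) (s+1) (by omega),
          ee_expand β (i+s+2) i (s+2) (by omega)]
        rw [show ((i+s+4:ℕ):ℝ)+β = ((((i:ℝ)+(s:ℝ)+2+β)+1)+1) from by push_cast; ring,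
          show ((i+s+3:ℕ):ℝ)+β = (((i:ℝ)+(s:ℝ)+2+β)+1) from by push_cast; ring,
          show ((i+s+2:ℕ):ℝ)+β = ((i:ℝ)+(s:ℝ)+2+β) from by push_cast; ring]
        simp only [show i+2 = (i+1)+1 from rfl, show s+2 = (s+1)+1 from rfl, ff_succ_left]
        simp only [ff_succ]
        have hP1 : (((i+s+4).choose (i+2)) : ℝ) = ((i+s+3).choose (i+1) : ℝ) + ((i+s+3).choose (i+1+1) : ℝ) := by
          rw [show i+s+4 = (i+s+3)+1 from by omega, show i+2 = (i+1)+1 from rfl, Nat.choose_succ_succ]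
          push_cast; ring
        have hP2 : (((i+s+3).choose (i+1)) : ℝ) = ((i+s+2).choose i : ℝ) + ((i+s+2).choose (i+1) : ℝ) := by
          rw [show i+s+3 = (i+s+2)+1 from by omega, Nat.choose_succ_succ]
          push_cast; ring
        have hP3 : (((i+s+3).choose (i+1+1)) : ℝ) = ((i+s+2).choose (i+1) : ℝ) + ((i+s+2).choose (i+1+1) : ℝ) := by
          rw [show i+s+3 = (i+s+2)+1 from by omega, Nat.choose_succ_succ]
          push_cast; ring
        have hR1 : (((i+s+2).choose (i+1+1)) : ℝ) * ((i:ℝ)+2) = (((i+s+2).choose (i+1)) : ℝ) * ((s:ℝ)+1) := by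
          have h := Nat.choose_succ_right_eq (i+s+2) (i+1)
          rw [show i+s+2-(i+1) = s+1 from by omega] at h
          exact_mod_cast h
        have hR2 : (((i+s+2).choose (i+1)) : ℝ) * ((i:ℝ)+1) = (((i+s+2).choose i) : ℝ) * ((s:ℝ)+2) := by
          have h := Nat.choose_succ_right_eq (i+s+2) i
          rw [show i+s+2-i = s+2 from by omega] at h
          exact_mod_cast h
        rw [hP1, hP2, hP3]
        push_cast
        linear_combination
          (fallingFactorial ((i:ℝ)+(s:ℝ)+2+β) i * fallingFactorial ((i:ℝ)+(s:ℝ)+2+β) s *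
            ((i:ℝ)+(s:ℝ)+4+β) * ((i:ℝ)+(s:ℝ)+3+β) *
            (2*β^2 + β*(2*(s:ℝ)+2*(i:ℝ)+7) + ((i:ℝ)^2 + (i:ℝ)*(s:ℝ) + 5*(i:ℝ) + 2*(s:ℝ) + 6))) * hR1
          - (fallingFactorial ((i:ℝ)+(s:ℝ)+2+β) i * fallingFactorial ((i:ℝ)+(s:ℝ)+2+β) s *
            ((i:ℝ)+(s:ℝ)+4+β) * ((i:ℝ)+(s:ℝ)+3+β) *
            (2*β^2 + β*(2*(s:ℝ)+2*(i:ℝ)+7) + ((s:ℝ)^2 + (i:ℝ)*(s:ℝ) + 5*(s:ℝ) + 2*(i:ℝ) + 6))) * hR2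

lemma sumrec (β A B : ℝ) (m : ℕ) :
    ((m : ℝ) + 2 + 2 * β) * (∑ k ∈ Finset.range (m + 3), ee β (m + 2) k * A ^ k * B ^ (m + 2 - k))
      - (2 * (m : ℝ) + 2 * β + 3) * ((m : ℝ) + 2 + β) * (A + B) *
          (∑ k ∈ Finset.range (m + 2), ee β (m + 1) k * A ^ k * B ^ (m + 1 - k))
      + ((m : ℝ) + 1) * ((m : ℝ) + 2 + β) * ((m : ℝ) + 1 + β) * (B - A) ^ 2 *
          (∑ k ∈ Finset.range (m + 1), ee β m k * A ^ k * B ^ (m - k)) = 0 := by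
  have hB1 : ∑ j ∈ Finset.range (m + 3), ee β (m + 1) j * A ^ j * B ^ (m + 2 - j)
      = B * ∑ k ∈ Finset.range (m + 2), ee β (m + 1) k * A ^ k * B ^ (m + 1 - k) := by
    rw [Finset.sum_range_succ, ee_of_lt β (by omega : m + 1 < m + 2), Finset.mul_sum]
    simp only [zero_mul, add_zero]
    apply Finset.sum_congr rfl
    intro k hk
    rw [show m + 2 - k = (m + 1 - k) + 1 from by
      have := Finset.mem_range.mp hk; omega, pow_succ]
    ring
  have hA1 : ∑ j ∈ Finset.range (m + 3), (if j = 0 then 0 else ee β (m + 1) (j - 1)) * A ^ j * B ^ (m + 2 - j)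
      = A * ∑ k ∈ Finset.range (m + 2), ee β (m + 1) k * A ^ k * B ^ (m + 1 - k) := by
    rw [Finset.sum_range_succ']
    simp only [Nat.succ_ne_zero, if_neg, if_pos rfl, Nat.add_sub_cancel, zero_mul, add_zero,
      ite_false, reduceIte]
    rw [Finset.mul_sum]
    apply Finset.sum_congr rfl
    intro k _
    rw [show m + 2 - (k + 1) = m + 1 - k from by omega, pow_succ']
    ring
  have hBB : ∑ j ∈ Finset.range (m + 3), ee β m j * A ^ j * B ^ (m + 2 - j)
      = B ^ 2 * ∑ k ∈ Finset.range (m + 1), ee β m k * A ^ k * B ^ (m - k) := by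
    rw [Finset.sum_range_succ, Finset.sum_range_succ, ee_of_lt β (by omega : m < m + 1),
      ee_of_lt β (by omega : m < m + 2), Finset.mul_sum]
    simp only [zero_mul, add_zero]
    apply Finset.sum_congr rfl
    intro k hk
    rw [show m + 2 - k = (m - k) + 2 from by
      have := Finset.mem_range.mp hk; omega, pow_add]
    ring
  have hAB : ∑ j ∈ Finset.range (m + 3), (if j = 0 then 0 else ee β m (j - 1)) * A ^ j * B ^ (m + 2 - j)
      = (A * B) * ∑ k ∈ Finset.range (m + 1), ee β m k * A ^ k * B ^ (m - k) := by
    rw [Finset.sum_range_succ']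
    simp only [Nat.succ_ne_zero, if_neg, if_pos rfl, Nat.add_sub_cancel, zero_mul, add_zero,
      ite_false, reduceIte]
    rw [Finset.sum_range_succ, ee_of_lt β (by omega : m < m + 1), Finset.mul_sum]
    simp only [zero_mul, add_zero]
    apply Finset.sum_congr rfl
    intro k hk
    rw [show m + 2 - (k + 1) = (m - k) + 1 from by
      have := Finset.mem_range.mp hk; omega, pow_add, pow_succ']
    ring
  have hAA : ∑ j ∈ Finset.range (m + 3), (if j ≤ 1 then 0 else ee β m (j - 2)) * A ^ j * B ^ (m + 2 - j)
      = A ^ 2 * ∑ k ∈ Finset.range (m + 1), ee β m k * A ^ k * B ^ (m - k) := by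
    rw [Finset.sum_range_succ', Finset.sum_range_succ']
    simp only [show ∀ k : ℕ, ¬(k + 1 + 1 ≤ 1) from by omega, if_neg, if_pos,
      show (0 : ℕ) ≤ 1 from by omega, show (0 + 1 : ℕ) ≤ 1 from by omega,
      zero_mul, add_zero, ite_false, reduceIte]
    rw [Finset.mul_sum]
    apply Finset.sum_congr rfl
    intro k _
    rw [show k + 1 + 1 - 2 = k from by omega, show m + 2 - (k + 1 + 1) = m - k from by omega]
    ring
  have key' : ∀ j ∈ Finset.range (m + 3),
      ((m : ℝ) + 2 + 2 * β) * (ee β (m + 2) j * A ^ j * B ^ (m + 2 - j))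
        - (2 * (m : ℝ) + 2 * β + 3) * ((m : ℝ) + 2 + β) *
            (ee β (m + 1) j * A ^ j * B ^ (m + 2 - j))
        - (2 * (m : ℝ) + 2 * β + 3) * ((m : ℝ) + 2 + β) *
            ((if j = 0 then 0 else ee β (m + 1) (j - 1)) * A ^ j * B ^ (m + 2 - j))
        + ((m : ℝ) + 1) * ((m : ℝ) + 2 + β) * ((m : ℝ) + 1 + β) *
            (ee β m j * A ^ j * B ^ (m + 2 - j))
        - ((m : ℝ) + 1) * ((m : ℝ) + 2 + β) * ((m : ℝ) + 1 + β) * 2 *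
            ((if j = 0 then 0 else ee β m (j - 1)) * A ^ j * B ^ (m + 2 - j))
        + ((m : ℝ) + 1) * ((m : ℝ) + 2 + β) * ((m : ℝ) + 1 + β) *
            ((if j ≤ 1 then 0 else ee β m (j - 2)) * A ^ j * B ^ (m + 2 - j)) = 0 := by
    intro j hj
    have hk := key β m j (by have := Finset.mem_range.mp hj; omega)
    revert hk
    split_ifs <;> intro hk <;> linear_combination (A ^ j * B ^ (m + 2 - j)) * hk
  have hsum := Finset.sum_eq_zero key'
  rw [Finset.sum_add_distrib, Finset.sum_sub_distrib, Finset.sum_add_distrib,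
    Finset.sum_sub_distrib, Finset.sum_sub_distrib,
    ← Finset.mul_sum, ← Finset.mul_sum, ← Finset.mul_sum,
    ← Finset.mul_sum, ← Finset.mul_sum, ← Finset.mul_sum] at hsum
  rw [hB1, hA1, hBB, hAB, hAA] at hsum
  linear_combination hsum


lemma hasDerivAt_one_sub_rpow (c : ℝ) {t : ℝ} (h : t < 1) :
    HasDerivAt (fun s : ℝ => (1 - s) ^ c) (-(c * (1 - t) ^ (c - 1))) t := by
  have h1 : HasDerivAt (fun s : ℝ => 1 - s) (-1) t := by
    simpa using (hasDerivAt_id t).const_sub 1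
  have h2 : HasDerivAt (fun x : ℝ => x ^ c) (c * (1 - t) ^ (c - 1)) (1 - t) :=
    Real.hasDerivAt_rpow_const (Or.inl (by intro hc; nlinarith [hc] : (1 : ℝ) - t ≠ 0))
  have := h2.comp t h1
  simpa [Function.comp_def] using this

lemma hasDerivAt_one_add_rpow (c : ℝ) {t : ℝ} (h : -1 < t) :
    HasDerivAt (fun s : ℝ => (1 + s) ^ c) (c * (1 + t) ^ (c - 1)) t := by
  have h1 : HasDerivAt (fun s : ℝ => 1 + s) 1 t := by
    simpa using (hasDerivAt_id t).const_add 1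
  have h2 : HasDerivAt (fun x : ℝ => x ^ c) (c * (1 + t) ^ (c - 1)) (1 + t) :=
    Real.hasDerivAt_rpow_const (Or.inl (by intro hc; nlinarith [hc] : (1 : ℝ) + t ≠ 0))
  have := h2.comp t h1
  simpa [Function.comp_def] using this

lemma iter_prod (a b : ℝ) (n : ℕ) :
    ∀ t ∈ Set.Ioo (-1 : ℝ) 1,
      iteratedDeriv n (fun s : ℝ => (1 - s) ^ a * (1 + s) ^ b) t
        = ∑ k ∈ Finset.range (n + 1), (-1 : ℝ) ^ (n - k) * ((n.choose k : ℕ) : ℝ)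
            * fallingFactorial a (n - k) * fallingFactorial b k
            * (1 - t) ^ (a - ((n - k : ℕ) : ℝ)) * (1 + t) ^ (b - (k : ℝ)) := by
  induction n with
  | zero =>
    intro t _
    simp [iteratedDeriv_zero, ff_zero]
  | succ n ih =>
    intro t ht
    obtain ⟨ht1, ht2⟩ := ht
    rw [iteratedDeriv_succ]
    have hev : deriv (iteratedDeriv n fun s : ℝ => (1 - s) ^ a * (1 + s) ^ b) t
        = deriv (fun x : ℝ => ∑ k ∈ Finset.range (n + 1), (-1 : ℝ) ^ (n - k) * ((n.choose k : ℕ) : ℝ)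
            * fallingFactorial a (n - k) * fallingFactorial b k
            * (1 - x) ^ (a - ((n - k : ℕ) : ℝ)) * (1 + x) ^ (b - (k : ℝ))) t := by
      apply Filter.EventuallyEq.deriv_eq
      filter_upwards [isOpen_Ioo.mem_nhds (show t ∈ Set.Ioo (-1 : ℝ) 1 from ⟨ht1, ht2⟩)] with x hx
      exact ih x hx
    rw [hev]
    have hD : HasDerivAt (fun x : ℝ => ∑ k ∈ Finset.range (n + 1), (-1 : ℝ) ^ (n - k) * ((n.choose k : ℕ) : ℝ)
            * fallingFactorial a (n - k) * fallingFactorial b k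
            * (1 - x) ^ (a - ((n - k : ℕ) : ℝ)) * (1 + x) ^ (b - (k : ℝ)))
        (∑ k ∈ Finset.range (n + 1), ((-1 : ℝ) ^ (n - k) * ((n.choose k : ℕ) : ℝ)
            * fallingFactorial a (n - k) * fallingFactorial b k
            * (-((a - ((n - k : ℕ) : ℝ)) * (1 - t) ^ (a - ((n - k : ℕ) : ℝ) - 1)) * (1 + t) ^ (b - (k : ℝ))
              + (1 - t) ^ (a - ((n - k : ℕ) : ℝ)) * ((b - (k : ℝ)) * (1 + t) ^ (b - (k : ℝ) - 1))))) t := by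
      apply HasDerivAt.fun_sum
      intro k _
      have hmul := (hasDerivAt_one_sub_rpow (a - ((n - k : ℕ) : ℝ)) ht2).mul
        (hasDerivAt_one_add_rpow (b - (k : ℝ)) ht1)
      have := hmul.const_mul ((-1 : ℝ) ^ (n - k) * ((n.choose k : ℕ) : ℝ)
            * fallingFactorial a (n - k) * fallingFactorial b k)
      simpa [mul_assoc, mul_add] using this
    rw [hD.deriv]
    -- now the combinatorial reindexing
    have hP : ∀ k ∈ Finset.range (n + 1),
        (-1 : ℝ) ^ (n - k) * ((n.choose k : ℕ) : ℝ)
            * fallingFactorial a (n - k) * fallingFactorial b k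
            * (-((a - ((n - k : ℕ) : ℝ)) * (1 - t) ^ (a - ((n - k : ℕ) : ℝ) - 1)) * (1 + t) ^ (b - (k : ℝ)))
        = (-1 : ℝ) ^ (n + 1 - k) * ((n.choose k : ℕ) : ℝ)
            * fallingFactorial a (n + 1 - k) * fallingFactorial b k
            * (1 - t) ^ (a - ((n + 1 - k : ℕ) : ℝ)) * (1 + t) ^ (b - (k : ℝ)) := by
      intro k hk
      have hkn : k ≤ n := by have := Finset.mem_range.mp hk; omega
      rw [show n + 1 - k = (n - k) + 1 from by omega, ff_succ, pow_succ,
        show (((n - k) + 1 : ℕ) : ℝ) = ((n - k : ℕ) : ℝ) + 1 from by push_cast; ring,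
        show a - (((n - k : ℕ) : ℝ) + 1) = a - ((n - k : ℕ) : ℝ) - 1 from by ring]
      ring
    have hQ : ∀ k ∈ Finset.range (n + 1),
        (-1 : ℝ) ^ (n - k) * ((n.choose k : ℕ) : ℝ)
            * fallingFactorial a (n - k) * fallingFactorial b k
            * ((1 - t) ^ (a - ((n - k : ℕ) : ℝ)) * ((b - (k : ℝ)) * (1 + t) ^ (b - (k : ℝ) - 1)))
        = (-1 : ℝ) ^ (n + 1 - (k + 1)) * ((n.choose k : ℕ) : ℝ)
            * fallingFactorial a (n + 1 - (k + 1)) * fallingFactorial b (k + 1)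
            * (1 - t) ^ (a - ((n + 1 - (k + 1) : ℕ) : ℝ)) * (1 + t) ^ (b - ((k + 1 : ℕ) : ℝ)) := by
      intro k hk
      rw [show n + 1 - (k + 1) = n - k from by omega, ff_succ,
        show (((k : ℕ) + 1 : ℕ) : ℝ) = (k : ℝ) + 1 from by push_cast; ring,
        show b - ((k : ℝ) + 1) = b - (k : ℝ) - 1 from by ring]
      ring
    have split : ∑ k ∈ Finset.range (n + 1 + 1), (-1 : ℝ) ^ (n + 1 - k) * (((n + 1).choose k : ℕ) : ℝ)
            * fallingFactorial a (n + 1 - k) * fallingFactorial b k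
            * (1 - t) ^ (a - ((n + 1 - k : ℕ) : ℝ)) * (1 + t) ^ (b - (k : ℝ))
        = (∑ k ∈ Finset.range (n + 1 + 1), (-1 : ℝ) ^ (n + 1 - k) * ((n.choose k : ℕ) : ℝ)
            * fallingFactorial a (n + 1 - k) * fallingFactorial b k
            * (1 - t) ^ (a - ((n + 1 - k : ℕ) : ℝ)) * (1 + t) ^ (b - (k : ℝ)))
          + (∑ k ∈ Finset.range (n + 1 + 1), (if k = 0 then 0 else (-1 : ℝ) ^ (n + 1 - k) * ((n.choose (k - 1) : ℕ) : ℝ)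
            * fallingFactorial a (n + 1 - k) * fallingFactorial b k
            * (1 - t) ^ (a - ((n + 1 - k : ℕ) : ℝ)) * (1 + t) ^ (b - (k : ℝ)))) := by
      rw [← Finset.sum_add_distrib]
      apply Finset.sum_congr rfl
      intro k _
      rcases k with _ | k'
      · simp
      · rw [if_neg (Nat.succ_ne_zero k'), Nat.add_sub_cancel,
          show (n + 1).choose (k' + 1) = n.choose k' + n.choose (k' + 1) from Nat.choose_succ_succ _ _]
        push_cast
        ring
    have e1 : ∑ k ∈ Finset.range (n + 1 + 1), (-1 : ℝ) ^ (n + 1 - k) * ((n.choose k : ℕ) : ℝ)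
            * fallingFactorial a (n + 1 - k) * fallingFactorial b k
            * (1 - t) ^ (a - ((n + 1 - k : ℕ) : ℝ)) * (1 + t) ^ (b - (k : ℝ))
        = ∑ k ∈ Finset.range (n + 1), (-1 : ℝ) ^ (n + 1 - k) * ((n.choose k : ℕ) : ℝ)
            * fallingFactorial a (n + 1 - k) * fallingFactorial b k
            * (1 - t) ^ (a - ((n + 1 - k : ℕ) : ℝ)) * (1 + t) ^ (b - (k : ℝ)) := by
      rw [Finset.sum_range_succ, Nat.choose_succ_self]
      simp
    have e2 : ∑ k ∈ Finset.range (n + 1 + 1), (if k = 0 then 0 else (-1 : ℝ) ^ (n + 1 - k) * ((n.choose (k - 1) : ℕ) : ℝ)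
            * fallingFactorial a (n + 1 - k) * fallingFactorial b k
            * (1 - t) ^ (a - ((n + 1 - k : ℕ) : ℝ)) * (1 + t) ^ (b - (k : ℝ)))
        = ∑ k ∈ Finset.range (n + 1), (-1 : ℝ) ^ (n + 1 - (k + 1)) * ((n.choose k : ℕ) : ℝ)
            * fallingFactorial a (n + 1 - (k + 1)) * fallingFactorial b (k + 1)
            * (1 - t) ^ (a - ((n + 1 - (k + 1) : ℕ) : ℝ)) * (1 + t) ^ (b - ((k + 1 : ℕ) : ℝ)) := by
      rw [Finset.sum_range_succ']
      simp only [Nat.succ_ne_zero, reduceIte, Nat.add_sub_cancel, if_pos rfl, add_zero]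
    rw [split, e1, e2, ← Finset.sum_add_distrib]
    apply Finset.sum_congr rfl
    intro k hk
    rw [mul_add, hP k hk, hQ k hk]

lemma iteratedDeriv_congr_open {f g : ℝ → ℝ} {U : Set ℝ} (hU : IsOpen U)
    (h : ∀ x ∈ U, f x = g x) (n : ℕ) : ∀ x ∈ U, iteratedDeriv n f x = iteratedDeriv n g x := by
  induction n with
  | zero => simpa using h
  | succ n ih =>
    intro x hx
    rw [iteratedDeriv_succ, iteratedDeriv_succ]
    apply Filter.EventuallyEq.deriv_eq
    filter_upwards [hU.mem_nhds hx] with y hy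
    exact ih y hy

lemma legendreP_eq_sum (p n : ℕ) (t : ℝ) (ht : t ∈ Set.Ioo (-1 : ℝ) 1) :
    legendreP p n t = (fallingFactorial ((n : ℝ) + ((p : ℝ) - 3) / 2) n)⁻¹ *
      ∑ k ∈ Finset.range (n + 1), ee (((p : ℝ) - 3) / 2) n k *
        ((t - 1) / 2) ^ k * ((t + 1) / 2) ^ (n - k) := by
  obtain ⟨ht1, ht2⟩ := ht
  have h1t : (0 : ℝ) < 1 - t := by linarith
  have h1t' : (0 : ℝ) < 1 + t := by linarith
  set α := ((p : ℝ) - 3) / 2 with hα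
  have hfun : ∀ x ∈ Set.Ioo (-1 : ℝ) 1,
      (fun s : ℝ => (1 - s ^ 2) ^ ((n : ℝ) + α)) x
        = (fun s : ℝ => (1 - s) ^ ((n : ℝ) + α) * (1 + s) ^ ((n : ℝ) + α)) x := by
    intro x hx
    have hx1 : (0 : ℝ) ≤ 1 - x := by nlinarith [hx.1, hx.2]
    have hx2 : (0 : ℝ) ≤ 1 + x := by nlinarith [hx.1, hx.2]
    simp only
    rw [show (1 - x ^ 2 : ℝ) = (1 - x) * (1 + x) from by ring, Real.mul_rpow hx1 hx2]
  have hiter : iteratedDeriv n (fun s : ℝ => (1 - s ^ 2) ^ ((n : ℝ) + α)) t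
      = iteratedDeriv n (fun s : ℝ => (1 - s) ^ ((n : ℝ) + α) * (1 + s) ^ ((n : ℝ) + α)) t :=
    iteratedDeriv_congr_open isOpen_Ioo hfun n t ⟨ht1, ht2⟩
  have hW : (1 - t ^ 2 : ℝ) ^ (((3 : ℝ) - (p : ℝ)) / 2) = (1 - t) ^ (-α) * (1 + t) ^ (-α) := by
    rw [show ((3 : ℝ) - (p : ℝ)) / 2 = -α from by rw [hα]; ring,
      show (1 - t ^ 2 : ℝ) = (1 - t) * (1 + t) from by ring, Real.mul_rpow h1t.le h1t'.le]
  rw [legendreP, hiter, iter_prod ((n : ℝ) + α) ((n : ℝ) + α) n t ⟨ht1, ht2⟩, hW,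
    Finset.mul_sum, Finset.mul_sum]
  rw [show (((p : ℝ) - 3) / 2) = α from hα.symm]
  apply Finset.sum_congr rfl
  intro k hk
  have hkn : k ≤ n := by have := Finset.mem_range.mp hk; omega
  have r1 : (1 - t) ^ ((n : ℝ) + α - ((n - k : ℕ) : ℝ)) = (1 - t) ^ (α) * (1 - t) ^ (k : ℕ) := by
    rw [show (n : ℝ) + α - ((n - k : ℕ) : ℝ) = α + (k : ℝ) from by
      rw [Nat.cast_sub hkn]; ring, Real.rpow_add h1t, Real.rpow_natCast]
  have r2 : (1 + t) ^ ((n : ℝ) + α - (k : ℝ)) = (1 + t) ^ (α) * (1 + t) ^ ((n - k : ℕ)) := by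
    rw [show (n : ℝ) + α - (k : ℝ) = α + ((n - k : ℕ) : ℝ) from by
      rw [Nat.cast_sub hkn]; ring, Real.rpow_add h1t', Real.rpow_natCast]
  have r3 : ((t - 1) / 2) ^ k = (-1 : ℝ) ^ k * (1 - t) ^ k / 2 ^ k := by
    rw [div_pow, show (t - 1 : ℝ) = (-1) * (1 - t) from by ring, mul_pow]
  have r4 : ((t + 1) / 2) ^ (n - k) = (1 + t) ^ (n - k) / 2 ^ (n - k) := by
    rw [div_pow, show (t + 1 : ℝ) = 1 + t from by ring]
  have h11 : (1 - t) ^ (-α) * (1 - t) ^ (α) = 1 := by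
    rw [← Real.rpow_add h1t]; norm_num
  have h22 : (1 + t) ^ (-α) * (1 + t) ^ (α) = 1 := by
    rw [← Real.rpow_add h1t']; norm_num
  have hpow2 : (2 : ℝ) ^ k * 2 ^ (n - k) = 2 ^ n := by
    rw [← pow_add, Nat.add_sub_cancel' hkn]
  have hu : ((2:ℝ)⁻¹) ^ k * ((2:ℝ)⁻¹) ^ (n - k) = ((2:ℝ)⁻¹) ^ n := by
    rw [← pow_add, Nat.add_sub_cancel' hkn]
  have hprod : (-1 : ℝ) ^ n * (-1 : ℝ) ^ (n - k) = (-1 : ℝ) ^ k := by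
    rw [← pow_add, show n + (n - k) = k + 2 * (n - k) from by omega, pow_add, pow_mul]
    norm_num
  rw [r1, r2, r3, r4]
  simp only [ee]
  have h2 : ((2:ℝ)) ^ n ≠ 0 := by positivity
  have h2k : ((2:ℝ)) ^ k ≠ 0 := by positivity
  have h2nk : ((2:ℝ)) ^ (n-k) ≠ 0 := by positivity
  have hDn : (2:ℝ) ^ n * ((2:ℝ) ^ n)⁻¹ = 1 := mul_inv_cancel₀ h2
  have hDk : (2:ℝ) ^ k * ((2:ℝ) ^ k)⁻¹ = 1 := mul_inv_cancel₀ h2k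
  have hDm : (2:ℝ) ^ (n-k) * ((2:ℝ) ^ (n-k))⁻¹ = 1 := mul_inv_cancel₀ h2nk
  linear_combination
    ((fallingFactorial ((n:ℝ) + α) n)⁻¹ * ((2:ℝ)^n)⁻¹ * (1 - t) ^ (-α) * (1 + t) ^ (-α)
      * (1 - t) ^ α * (1 + t) ^ α * ((n.choose k : ℕ) : ℝ)
      * fallingFactorial ((n:ℝ) + α) (n - k) * fallingFactorial ((n:ℝ) + α) k
      * (1 - t) ^ k * (1 + t) ^ (n - k)) * hprod
    + ((-1:ℝ)^k * (fallingFactorial ((n:ℝ) + α) n)⁻¹ * ((2:ℝ)^n)⁻¹ * (1 + t) ^ (-α) * (1 + t) ^ α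
      * ((n.choose k : ℕ) : ℝ) * fallingFactorial ((n:ℝ) + α) (n - k) * fallingFactorial ((n:ℝ) + α) k
      * (1 - t) ^ k * (1 + t) ^ (n - k)) * h11
    + ((-1:ℝ)^k * (fallingFactorial ((n:ℝ) + α) n)⁻¹ * ((2:ℝ)^n)⁻¹
      * ((n.choose k : ℕ) : ℝ) * fallingFactorial ((n:ℝ) + α) (n - k) * fallingFactorial ((n:ℝ) + α) k
      * (1 - t) ^ k * (1 + t) ^ (n - k)) * h22
    + ((-1:ℝ)^k * (fallingFactorial ((n:ℝ) + α) n)⁻¹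
      * ((n.choose k : ℕ) : ℝ) * fallingFactorial ((n:ℝ) + α) (n - k) * fallingFactorial ((n:ℝ) + α) k
      * (1 - t) ^ k * (1 + t) ^ (n - k) * ((2:ℝ)^k)⁻¹ * ((2:ℝ)^(n-k))⁻¹ * ((2:ℝ)^n)⁻¹) * hpow2
    + ((-1:ℝ)^k * (fallingFactorial ((n:ℝ) + α) n)⁻¹
      * ((n.choose k : ℕ) : ℝ) * fallingFactorial ((n:ℝ) + α) (n - k) * fallingFactorial ((n:ℝ) + α) k
      * (1 - t) ^ k * (1 + t) ^ (n - k) * ((2:ℝ)^k)⁻¹ * ((2:ℝ)^(n-k))⁻¹) * hDn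
    - ((-1:ℝ)^k * (fallingFactorial ((n:ℝ) + α) n)⁻¹
      * ((n.choose k : ℕ) : ℝ) * fallingFactorial ((n:ℝ) + α) (n - k) * fallingFactorial ((n:ℝ) + α) k
      * (1 - t) ^ k * (1 + t) ^ (n - k) * ((2:ℝ)^n)⁻¹ * (2:ℝ)^k * ((2:ℝ)^k)⁻¹) * hDm
    - ((-1:ℝ)^k * (fallingFactorial ((n:ℝ) + α) n)⁻¹
      * ((n.choose k : ℕ) : ℝ) * fallingFactorial ((n:ℝ) + α) (n - k) * fallingFactorial ((n:ℝ) + α) k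
      * (1 - t) ^ k * (1 + t) ^ (n - k) * ((2:ℝ)^n)⁻¹) * hDk

/-- The Legendre polynomials in `p` dimensions satisfy the recurrence
`(n+p−2) P_{n+1,p}(t) − (2n+p−2) t P_{n,p}(t) + n P_{n−1,p}(t) = 0` for `n ≥ 1`. -/
theorem legendreP_recurrence
    (p : ℕ) (hp : 2 ≤ p) (n : ℕ) (hn : 1 ≤ n) (t : ℝ) (ht : t ∈ Set.Ioo (-1 : ℝ) 1) :
    ((n : ℝ) + (p : ℝ) - 2) * legendreP p (n + 1) t
        - (2 * (n : ℝ) + (p : ℝ) - 2) * t * legendreP p n t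
        + (n : ℝ) * legendreP p (n - 1) t = 0 := by
  obtain ⟨m, rfl⟩ : ∃ m, n = m + 1 := ⟨n - 1, by omega⟩
  have hp2 : (2 : ℝ) ≤ (p : ℝ) := by exact_mod_cast hp
  rw [legendreP_eq_sum p (m + 1 + 1) t ht, legendreP_eq_sum p (m + 1) t ht,
    show m + 1 - 1 = m from rfl, legendreP_eq_sum p m t ht]
  simp only [show m + 1 + 1 = m + 2 from rfl, show m + 2 + 1 = m + 3 from rfl]
  have hpos : 0 < fallingFactorial ((m : ℝ) + ((p : ℝ) - 3) / 2) m := by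
    rw [fallingFactorial]
    apply Finset.prod_pos
    intro i hi
    have hi' : (i : ℝ) + 1 ≤ (m : ℝ) := by
      have := Finset.mem_range.mp hi
      exact_mod_cast Nat.succ_le_of_lt this
    linarith
  have c1 : fallingFactorial (((m + 1 : ℕ) : ℝ) + ((p : ℝ) - 3) / 2) (m + 1)
      = ((m : ℝ) + 1 + ((p : ℝ) - 3) / 2) * fallingFactorial ((m : ℝ) + ((p : ℝ) - 3) / 2) m := by
    rw [show ((m + 1 : ℕ) : ℝ) + ((p : ℝ) - 3) / 2 = ((m : ℝ) + ((p : ℝ) - 3) / 2) + 1 from by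
      push_cast; ring, ff_succ_left]
    ring
  have c2 : fallingFactorial (((m + 2 : ℕ) : ℝ) + ((p : ℝ) - 3) / 2) (m + 2)
      = ((m : ℝ) + 2 + ((p : ℝ) - 3) / 2) * (((m : ℝ) + 1 + ((p : ℝ) - 3) / 2)
        * fallingFactorial ((m : ℝ) + ((p : ℝ) - 3) / 2) m) := by
    rw [show ((m + 2 : ℕ) : ℝ) + ((p : ℝ) - 3) / 2 = (((m : ℝ) + ((p : ℝ) - 3) / 2) + 1) + 1 from by
      push_cast; ring, show m + 2 = (m + 1) + 1 from rfl, ff_succ_left, ff_succ_left]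
    ring
  rw [c2, c1]
  have h1 : (0 : ℝ) < (m : ℝ) + 1 + ((p : ℝ) - 3) / 2 := by
    have : (0 : ℝ) ≤ (m : ℝ) := Nat.cast_nonneg m
    linarith
  have h2 : (0 : ℝ) < (m : ℝ) + 2 + ((p : ℝ) - 3) / 2 := by
    have : (0 : ℝ) ≤ (m : ℝ) := Nat.cast_nonneg m
    linarith
  have hrec := sumrec (((p : ℝ) - 3) / 2) ((t - 1) / 2) ((t + 1) / 2) m
  have r1 : ((m : ℝ) + 1 + ((p : ℝ) - 3) / 2) * ((m : ℝ) + 1 + ((p : ℝ) - 3) / 2)⁻¹ = 1 :=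
    mul_inv_cancel₀ h1.ne'
  have r2 : ((m : ℝ) + 2 + ((p : ℝ) - 3) / 2) * ((m : ℝ) + 2 + ((p : ℝ) - 3) / 2)⁻¹ = 1 :=
    mul_inv_cancel₀ h2.ne'
  simp only [mul_inv]
  push_cast
  linear_combination
    (((m : ℝ) + 2 + ((p : ℝ) - 3) / 2)⁻¹ * ((m : ℝ) + 1 + ((p : ℝ) - 3) / 2)⁻¹
      * (fallingFactorial ((m : ℝ) + ((p : ℝ) - 3) / 2) m)⁻¹) * hrec
    + ((2 * (m : ℝ) + 2 * (((p : ℝ) - 3) / 2) + 3) * t * ((m : ℝ) + 1 + ((p : ℝ) - 3) / 2)⁻¹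
      * (fallingFactorial ((m : ℝ) + ((p : ℝ) - 3) / 2) m)⁻¹
      * (∑ k ∈ Finset.range (m + 2), ee (((p : ℝ) - 3) / 2) (m + 1) k
          * ((t - 1) / 2) ^ k * ((t + 1) / 2) ^ (m + 1 - k))) * r2
    - (((m : ℝ) + 1) * (fallingFactorial ((m : ℝ) + ((p : ℝ) - 3) / 2) m)⁻¹
      * (∑ k ∈ Finset.range (m + 1), ee (((p : ℝ) - 3) / 2) m k
          * ((t - 1) / 2) ^ k * ((t + 1) / 2) ^ (m - k))
      * ((m : ℝ) + 2 + ((p : ℝ) - 3) / 2) * ((m : ℝ) + 2 + ((p : ℝ) - 3) / 2)⁻¹) * r1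
    - (((m : ℝ) + 1) * (fallingFactorial ((m : ℝ) + ((p : ℝ) - 3) / 2) m)⁻¹
      * (∑ k ∈ Finset.range (m + 1), ee (((p : ℝ) - 3) / 2) m k
          * ((t - 1) / 2) ^ k * ((t + 1) / 2) ^ (m - k))) * r2
end

section
/- Let p ≥ 2 and let P_{n,p} denote the Legendre polynomial of degree n in p dimensions defined by the Rodrigues formula. Then |P_{n,p}(t)| ≤ 1 for all t ∈ (−1,1). -/
open scoped ContDiff
open Set

namespace LegAux

noncomputable def rr (p n : ℕ) : ℝ := (n : ℝ) + ((p : ℝ) - 3) / 2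
noncomputable def u (p n : ℕ) : ℝ → ℝ := fun s : ℝ => (1 - s ^ 2) ^ (rr p n)

lemma one_sub_sq_pos {t : ℝ} (ht : t ∈ Set.Ioo (-1 : ℝ) 1) : 0 < 1 - t ^ 2 := by
  nlinarith [ht.1, ht.2]

lemma u_smooth (p n : ℕ) : ContDiffOn ℝ ∞ (u p n) (Set.Ioo (-1 : ℝ) 1) := by
  intro t ht
  exact (ContDiffAt.rpow_const_of_ne
    ((contDiff_const.sub (contDiff_id.pow 2)).contDiffAt)
    (ne_of_gt (one_sub_sq_pos ht))).contDiffWithinAt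

lemma Du_smooth (p n k : ℕ) :
    ContDiffOn ℝ ∞ (iteratedDeriv k (u p n)) (Set.Ioo (-1 : ℝ) 1) := by
  induction k with
  | zero => simpa [iteratedDeriv_zero] using u_smooth p n
  | succ k ih =>
    rw [iteratedDeriv_succ]
    exact ih.deriv_of_isOpen isOpen_Ioo (le_of_eq (by rfl))

lemma Du_hasDerivAt (p n k : ℕ) {t : ℝ} (ht : t ∈ Set.Ioo (-1 : ℝ) 1) :
    HasDerivAt (iteratedDeriv k (u p n)) (iteratedDeriv (k + 1) (u p n) t) t := by
  have h : DifferentiableAt ℝ (iteratedDeriv k (u p n)) t :=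
    (((Du_smooth p n k).differentiableOn (by simp)).differentiableAt
      (isOpen_Ioo.mem_nhds ht))
  rw [iteratedDeriv_succ]
  exact h.hasDerivAt

lemma ff_zero (a : ℝ) : fallingFactorial a 0 = 1 := by simp [fallingFactorial]

lemma ff_succ (a : ℝ) (j : ℕ) :
    fallingFactorial a (j + 1) = fallingFactorial a j * (a - j) := by
  simp [fallingFactorial, Finset.prod_range_succ]

noncomputable def aa (r : ℝ) (k j : ℕ) : ℝ :=
  (-1 : ℝ) ^ j * (k.choose j : ℝ) * fallingFactorial r j * fallingFactorial r (k - j)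

lemma leibniz (p n k : ℕ) : ∀ t ∈ Set.Ioo (-1 : ℝ) 1,
    iteratedDeriv k (u p n) t =
      ∑ j ∈ Finset.range (k + 1),
        aa (rr p n) k j *
          ((1 - t) ^ (rr p n - (j : ℝ)) * (1 + t) ^ (rr p n - (k : ℝ) + (j : ℝ))) := by
  set r := rr p n with hr
  induction k with
  | zero =>
    intro t ht
    have h1 : (0:ℝ) < 1 - t := by linarith [ht.2]
    have h2 : (0:ℝ) < 1 + t := by linarith [ht.1]
    rw [iteratedDeriv_zero, Finset.sum_range_one]
    simp only [aa, ff_zero, Nat.choose_self, Nat.cast_zero, Nat.cast_one, pow_zero,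
      Nat.sub_zero, sub_zero, add_zero]
    rw [show u p n t = ((1 - t) * (1 + t)) ^ r by unfold u; ring_nf; rfl]
    rw [Real.mul_rpow h1.le h2.le]
    ring
  | succ k ih =>
    intro t ht
    have h1 : (0:ℝ) < 1 - t := by linarith [ht.2]
    have h2 : (0:ℝ) < 1 + t := by linarith [ht.1]
    have h1m : HasDerivAt (fun s : ℝ => 1 - s) (-1) t := by
      simpa using (hasDerivAt_id t).const_sub 1
    have h1p : HasDerivAt (fun s : ℝ => 1 + s) (1:ℝ) t := by
      simpa using (hasDerivAt_id t).const_add 1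
    -- the derivative of one summand
    have hterm : ∀ j : ℕ, HasDerivAt
        (fun s : ℝ => aa r k j * ((1 - s) ^ (r - (j:ℝ)) * (1 + s) ^ (r - (k:ℝ) + (j:ℝ))))
        (aa r k j * ((-1 * (r - (j:ℝ)) * (1 - t) ^ (r - (j:ℝ) - 1)) * (1 + t) ^ (r - (k:ℝ) + (j:ℝ))
          + (1 - t) ^ (r - (j:ℝ)) * (1 * (r - (k:ℝ) + (j:ℝ)) * (1 + t) ^ (r - (k:ℝ) + (j:ℝ) - 1)))) t := by
      intro j
      exact ((h1m.rpow_const (Or.inl h1.ne')).mul (h1p.rpow_const (Or.inl h2.ne'))).const_mul _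
    have hG : HasDerivAt
        (fun s : ℝ => ∑ j ∈ Finset.range (k + 1),
          aa r k j * ((1 - s) ^ (r - (j:ℝ)) * (1 + s) ^ (r - (k:ℝ) + (j:ℝ))))
        (∑ j ∈ Finset.range (k + 1),
          aa r k j * ((-1 * (r - (j:ℝ)) * (1 - t) ^ (r - (j:ℝ) - 1)) * (1 + t) ^ (r - (k:ℝ) + (j:ℝ))
          + (1 - t) ^ (r - (j:ℝ)) * (1 * (r - (k:ℝ) + (j:ℝ)) * (1 + t) ^ (r - (k:ℝ) + (j:ℝ) - 1)))) t :=
      HasDerivAt.fun_sum (fun j _ => hterm j)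
    have hstep : iteratedDeriv (k + 1) (u p n) t =
        ∑ j ∈ Finset.range (k + 1),
          aa r k j * ((-1 * (r - (j:ℝ)) * (1 - t) ^ (r - (j:ℝ) - 1)) * (1 + t) ^ (r - (k:ℝ) + (j:ℝ))
          + (1 - t) ^ (r - (j:ℝ)) * (1 * (r - (k:ℝ) + (j:ℝ)) * (1 + t) ^ (r - (k:ℝ) + (j:ℝ) - 1))) := by
      rw [iteratedDeriv_succ]
      have heq : iteratedDeriv k (u p n) =ᶠ[nhds t]
          (fun s : ℝ => ∑ j ∈ Finset.range (k + 1),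
            aa r k j * ((1 - s) ^ (r - (j:ℝ)) * (1 + s) ^ (r - (k:ℝ) + (j:ℝ)))) :=
        Filter.eventuallyEq_of_mem (isOpen_Ioo.mem_nhds ht) ih
      rw [heq.deriv_eq, hG.deriv]
    rw [hstep]
    -- now the purely algebraic resummation
    -- abbreviations
    set X : ℕ → ℝ := fun j => (1 - t) ^ (r - (j:ℝ)) * (1 + t) ^ (r - ((k:ℝ) + 1) + (j:ℝ)) with hX
    -- target: ∑_{j ∈ range (k+2)} aa r (k+1) j * X j
    have hA : ∀ j : ℕ, (j : ℝ) ≤ (k:ℝ) →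
        (-1 * (r - (j:ℝ)) * (1 - t) ^ (r - (j:ℝ) - 1)) * (1 + t) ^ (r - (k:ℝ) + (j:ℝ))
          = -1 * (r - (j:ℝ)) * X (j + 1) := by
      intro j hj
      rw [hX]
      push_cast
      ring_nf
    have hB : ∀ j : ℕ,
        (1 - t) ^ (r - (j:ℝ)) * (1 * (r - (k:ℝ) + (j:ℝ)) * (1 + t) ^ (r - (k:ℝ) + (j:ℝ) - 1))
          = (r - (k:ℝ) + (j:ℝ)) * X j := by
      intro j
      rw [hX]
      ring_nf
    -- named summand functions to keep sums syntactically stable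
    set L1 : ℕ → ℝ := fun j => aa r k j * (-1 * (r - (j:ℝ))) * X (j + 1) with hL1
    set L2 : ℕ → ℝ := fun j => aa r k j * (r - (k:ℝ) + (j:ℝ)) * X j with hL2
    set TT : ℕ → ℝ := fun j => aa r (k + 1) j * X j with hTT
    have hLHS : (∑ j ∈ Finset.range (k + 1),
          aa r k j * ((-1 * (r - (j:ℝ)) * (1 - t) ^ (r - (j:ℝ) - 1)) * (1 + t) ^ (r - (k:ℝ) + (j:ℝ))
          + (1 - t) ^ (r - (j:ℝ)) * (1 * (r - (k:ℝ) + (j:ℝ)) * (1 + t) ^ (r - (k:ℝ) + (j:ℝ) - 1))))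
        = ∑ j ∈ Finset.range (k + 1), (L1 j + L2 j) := by
      refine Finset.sum_congr rfl fun j hj => ?_
      have hjk : (j:ℝ) ≤ (k:ℝ) := by
        exact_mod_cast Nat.lt_succ_iff.mp (Finset.mem_range.mp hj)
      rw [mul_add, hA j hjk, hB j, hL1, hL2]
      ring
    have hRHS : (∑ j ∈ Finset.range (k + 1 + 1),
          aa r (k + 1) j * ((1 - t) ^ (r - (j:ℝ)) * (1 + t) ^ (r - ((k:ℕ)+1 : ℕ) + (j:ℝ))))
        = ∑ j ∈ Finset.range (k + 1 + 1), TT j := by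
      refine Finset.sum_congr rfl fun j hj => ?_
      rw [hTT, hX]
      push_cast
      ring_nf
    rw [hLHS]
    show _ = ∑ j ∈ Finset.range (k + 1 + 1),
          aa r (k + 1) j * ((1 - t) ^ (r - (j:ℝ)) * (1 + t) ^ (r - ((k:ℕ)+1 : ℕ) + (j:ℝ)))
    rw [hRHS]
    -- coefficient identities
    have e0 : TT 0 = L2 0 := by
      rw [hTT, hL2]
      unfold aa
      simp only [Nat.choose_zero_right, Nat.sub_zero, Nat.cast_one, pow_zero, ff_succ]
      push_cast
      ring
    have etop : TT (k + 1) = L1 k := by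
      rw [hTT, hL1]
      unfold aa
      simp only [Nat.choose_self, Nat.sub_self, ff_zero, ff_succ, Nat.cast_one]
      push_cast
      ring
    have emid : ∀ j ∈ Finset.range k, TT (j + 1) = L1 j + L2 (j + 1) := by
      intro j hj
      have hjk : j < k := Finset.mem_range.mp hj
      rw [hTT, hL1, hL2]
      unfold aa
      beta_reduce
      have h1 : k + 1 - (j + 1) = k - j := by omega
      have h2 : k - j = (k - (j + 1)) + 1 := by omega
      rw [h1, Nat.choose_succ_succ, ff_succ, h2, ff_succ]
      have h3 : ((k - (j + 1) : ℕ) : ℝ) = (k : ℝ) - (j : ℝ) - 1 := by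
        push_cast [Nat.cast_sub (by omega : j + 1 ≤ k)]; ring
      rw [h3]
      push_cast
      ring
    rw [Finset.sum_add_distrib, Finset.sum_range_succ L1 k, Finset.sum_range_succ' L2 k,
      Finset.sum_range_succ' TT (k + 1), Finset.sum_range_succ (fun j => TT (j + 1)) k,
      Finset.sum_congr rfl emid, Finset.sum_add_distrib, e0, etop]
    ring


lemma hasDerivAt_one_sub_sq (t : ℝ) : HasDerivAt (fun s : ℝ => 1 - s ^ 2) (-(2 * t)) t := by
  simpa using ((hasDerivAt_pow 2 t).const_sub 1)

/-- differentiate an identity that holds on an open set -/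
lemma deriv_zero_of_eqOn {F : ℝ → ℝ} {S : Set ℝ} (hS : IsOpen S)
    (h : ∀ s ∈ S, F s = 0) {t d : ℝ} (ht : t ∈ S) (hF : HasDerivAt F d t) : d = 0 := by
  have h1 : F =ᶠ[nhds t] fun _ => (0 : ℝ) := Filter.eventuallyEq_of_mem (hS.mem_nhds ht) h
  have h2 := h1.deriv_eq
  rw [hF.deriv] at h2
  simpa using h2

lemma relation0 (p n : ℕ) : ∀ t ∈ Set.Ioo (-1 : ℝ) 1,
    (1 - t ^ 2) * iteratedDeriv 1 (u p n) t
      + 2 * rr p n * t * iteratedDeriv 0 (u p n) t = 0 := by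
  intro t ht
  have hpos := one_sub_sq_pos ht
  have hu : HasDerivAt (u p n) ((-(2 * t)) * rr p n * (1 - t ^ 2) ^ (rr p n - 1)) t :=
    (hasDerivAt_one_sub_sq t).rpow_const (Or.inl (ne_of_gt hpos))
  rw [iteratedDeriv_one, iteratedDeriv_zero, hu.deriv]
  have h2 : (1 - t ^ 2) * (1 - t ^ 2) ^ (rr p n - 1) = (1 - t ^ 2) ^ rr p n := by
    rw [Real.rpow_sub hpos, Real.rpow_one]; field_simp
  show (1 - t ^ 2) * (-(2 * t) * rr p n * (1 - t ^ 2) ^ (rr p n - 1))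
      + 2 * rr p n * t * (1 - t ^ 2) ^ rr p n = 0
  linear_combination (-(2 * t * rr p n)) * h2

lemma rec_rel (p n k : ℕ) : ∀ t ∈ Set.Ioo (-1 : ℝ) 1,
    (1 - t ^ 2) * iteratedDeriv (k + 2) (u p n) t
      + 2 * (rr p n - (k + 1)) * t * iteratedDeriv (k + 1) (u p n) t
      + ((k : ℝ) + 1) * (2 * rr p n - k) * iteratedDeriv k (u p n) t = 0 := by
  induction k with
  | zero =>
    intro t ht
    have hF := ((hasDerivAt_one_sub_sq t).mul (Du_hasDerivAt p n 1 ht)).add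
      ((((hasDerivAt_id t).const_mul (2 * rr p n))).mul (Du_hasDerivAt p n 0 ht))
    have hd := deriv_zero_of_eqOn isOpen_Ioo (relation0 p n) ht hF
    simp only [id] at hd
    norm_num at hd ⊢
    linear_combination hd
  | succ k ih =>
    intro t ht
    have hF := (((hasDerivAt_one_sub_sq t).mul (Du_hasDerivAt p n (k + 2) ht)).add
      ((((hasDerivAt_id t).const_mul (2 * (rr p n - ((k : ℝ) + 1)))).mul
        (Du_hasDerivAt p n (k + 1) ht)))).add
      ((Du_hasDerivAt p n k ht).const_mul (((k : ℝ) + 1) * (2 * rr p n - k)))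
    have hd := deriv_zero_of_eqOn isOpen_Ioo ih ht hF
    simp only [id] at hd
    have e1 : k + 1 + 2 = k + 2 + 1 := by omega
    have e2 : k + 1 + 1 = k + 2 := by omega
    rw [e1, e2]
    push_cast at hd ⊢
    linear_combination hd


noncomputable def cc (p n : ℕ) : ℝ := (-1 : ℝ) ^ n / (2 ^ n * fallingFactorial (rr p n) n)

noncomputable def qf (p n : ℕ) : ℝ → ℝ := fun t =>
  cc p n * ∑ j ∈ Finset.range (n + 1), aa (rr p n) n j * ((1 - t) ^ (n - j) * (1 + t) ^ j)

noncomputable def legendreP' (p n : ℕ) (t : ℝ) : ℝ :=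
  ((-1 : ℝ) ^ n / (2 ^ n * fallingFactorial ((n : ℝ) + ((p : ℝ) - 3) / 2) n)) *
    (1 - t ^ 2) ^ (((3 : ℝ) - (p : ℝ)) / 2) *
    iteratedDeriv n (fun s : ℝ => (1 - s ^ 2) ^ ((n : ℝ) + ((p : ℝ) - 3) / 2)) t

lemma legendreP'_def (p n : ℕ) : legendreP' p n = fun t =>
    cc p n * (1 - t ^ 2) ^ (((3 : ℝ) - (p : ℝ)) / 2) * iteratedDeriv n (u p n) t := rfl

lemma legendreP'_eq_qf (p n : ℕ) : ∀ t ∈ Set.Ioo (-1 : ℝ) 1,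
    legendreP' p n t = qf p n t := by
  intro t ht
  have h1 : (0:ℝ) < 1 - t := by linarith [ht.2]
  have h2 : (0:ℝ) < 1 + t := by linarith [ht.1]
  rw [legendreP'_def, qf]
  beta_reduce
  rw [leibniz p n n t ht, mul_assoc, Finset.mul_sum]
  congr 1
  refine Finset.sum_congr rfl fun j hj => ?_
  have hjn : j ≤ n := Nat.lt_succ_iff.mp (Finset.mem_range.mp hj)
  have m1 : (1 - t ^ 2) ^ (((3:ℝ) - (p:ℝ)) / 2)
      = (1 - t) ^ (((3:ℝ) - (p:ℝ)) / 2) * (1 + t) ^ (((3:ℝ) - (p:ℝ)) / 2) := by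
    rw [show (1:ℝ) - t ^ 2 = (1 - t) * (1 + t) by ring, Real.mul_rpow h1.le h2.le]
  have m2 : (1 - t) ^ (((3:ℝ) - (p:ℝ)) / 2) * (1 - t) ^ (rr p n - (j:ℝ))
      = (1 - t) ^ (((n - j : ℕ)):ℝ) := by
    rw [← Real.rpow_add h1]; congr 1; rw [Nat.cast_sub hjn]; unfold rr; ring
  have m3 : (1 + t) ^ (((3:ℝ) - (p:ℝ)) / 2) * (1 + t) ^ (rr p n - (n:ℝ) + (j:ℝ))
      = (1 + t) ^ ((j:ℕ):ℝ) := by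
    rw [← Real.rpow_add h2]; congr 1; unfold rr; ring
  calc (1 - t ^ 2) ^ (((3:ℝ) - (p:ℝ)) / 2) *
        (aa (rr p n) n j * ((1 - t) ^ (rr p n - (j:ℝ)) * (1 + t) ^ (rr p n - (n:ℝ) + (j:ℝ))))
      = aa (rr p n) n j * (((1 - t) ^ (((3:ℝ) - (p:ℝ)) / 2) * (1 - t) ^ (rr p n - (j:ℝ)))
          * ((1 + t) ^ (((3:ℝ) - (p:ℝ)) / 2) * (1 + t) ^ (rr p n - (n:ℝ) + (j:ℝ)))) := by
        rw [m1]; ring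
    _ = aa (rr p n) n j * ((1 - t) ^ (((n - j : ℕ)):ℝ) * (1 + t) ^ ((j:ℕ):ℝ)) := by
        rw [m2, m3]
    _ = aa (rr p n) n j * ((1 - t) ^ (n - j) * (1 + t) ^ j) := by
        rw [Real.rpow_natCast, Real.rpow_natCast]


lemma hasDerivAt_P (p n : ℕ) {t : ℝ} (ht : t ∈ Set.Ioo (-1:ℝ) 1) :
    HasDerivAt (legendreP' p n)
      (cc p n * (-(2*t) * (((3:ℝ)-(p:ℝ))/2) * (1-t^2) ^ ((((3:ℝ)-(p:ℝ))/2) - 1))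
          * iteratedDeriv n (u p n) t
        + cc p n * (1-t^2) ^ (((3:ℝ)-(p:ℝ))/2) * iteratedDeriv (n+1) (u p n) t) t := by
  have hpos := one_sub_sq_pos ht
  have hw : HasDerivAt (fun s : ℝ => (1-s^2) ^ (((3:ℝ)-(p:ℝ))/2))
      (-(2*t) * (((3:ℝ)-(p:ℝ))/2) * (1-t^2) ^ ((((3:ℝ)-(p:ℝ))/2) - 1)) t :=
    (hasDerivAt_one_sub_sq t).rpow_const (Or.inl hpos.ne')
  rw [legendreP'_def]
  exact (hw.const_mul (cc p n)).mul (Du_hasDerivAt p n n ht)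

lemma P_ode (p n : ℕ) : ∀ t ∈ Set.Ioo (-1:ℝ) 1,
    (1 - t^2) * deriv (deriv (legendreP' p n)) t
      = ((p:ℝ) - 1) * t * deriv (legendreP' p n) t
        - ((n:ℝ) * ((n:ℝ) + (p:ℝ) - 2)) * legendreP' p n t := by
  intro t ht
  have hpos := one_sub_sq_pos ht
  have heq : deriv (legendreP' p n) =ᶠ[nhds t]
      (fun s => cc p n * (-(2*s) * (((3:ℝ)-(p:ℝ))/2) * (1-s^2) ^ ((((3:ℝ)-(p:ℝ))/2) - 1))
          * iteratedDeriv n (u p n) s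
        + cc p n * (1-s^2) ^ (((3:ℝ)-(p:ℝ))/2) * iteratedDeriv (n+1) (u p n) s) :=
    Filter.eventuallyEq_of_mem (isOpen_Ioo.mem_nhds ht)
      (fun s hs => (hasDerivAt_P p n hs).deriv)
  have hf1 : HasDerivAt (fun s : ℝ => -(2*s) * (((3:ℝ)-(p:ℝ))/2) * (1-s^2) ^ ((((3:ℝ)-(p:ℝ))/2)-1))
      ((-2 * (((3:ℝ)-(p:ℝ))/2)) * (1-t^2) ^ ((((3:ℝ)-(p:ℝ))/2)-1)
        + (-(2*t) * (((3:ℝ)-(p:ℝ))/2)) * (-(2*t) * ((((3:ℝ)-(p:ℝ))/2)-1)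
            * (1-t^2) ^ ((((3:ℝ)-(p:ℝ))/2)-1-1))) t := by
    have ha : HasDerivAt (fun s : ℝ => -(2*s) * (((3:ℝ)-(p:ℝ))/2)) (-2 * (((3:ℝ)-(p:ℝ))/2)) t := by
      simpa using (((hasDerivAt_id t).const_mul (2:ℝ)).neg.mul_const (((3:ℝ)-(p:ℝ))/2))
    have hb : HasDerivAt (fun s : ℝ => (1-s^2) ^ ((((3:ℝ)-(p:ℝ))/2)-1))
        (-(2*t) * ((((3:ℝ)-(p:ℝ))/2)-1) * (1-t^2) ^ ((((3:ℝ)-(p:ℝ))/2)-1-1)) t :=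
      (hasDerivAt_one_sub_sq t).rpow_const (Or.inl hpos.ne')
    exact ha.mul hb
  have hw : HasDerivAt (fun s : ℝ => (1-s^2) ^ (((3:ℝ)-(p:ℝ))/2))
      (-(2*t) * (((3:ℝ)-(p:ℝ))/2) * (1-t^2) ^ ((((3:ℝ)-(p:ℝ))/2) - 1)) t :=
    (hasDerivAt_one_sub_sq t).rpow_const (Or.inl hpos.ne')
  have hv2 := Du_hasDerivAt p n (n+1) ht
  rw [show n+1+1 = n+2 by omega] at hv2
  have hP1 : HasDerivAt
      (fun s => cc p n * (-(2*s) * (((3:ℝ)-(p:ℝ))/2) * (1-s^2) ^ ((((3:ℝ)-(p:ℝ))/2) - 1))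
          * iteratedDeriv n (u p n) s
        + cc p n * (1-s^2) ^ (((3:ℝ)-(p:ℝ))/2) * iteratedDeriv (n+1) (u p n) s)
      (cc p n * ((-2 * (((3:ℝ)-(p:ℝ))/2)) * (1-t^2) ^ ((((3:ℝ)-(p:ℝ))/2)-1)
        + (-(2*t) * (((3:ℝ)-(p:ℝ))/2)) * (-(2*t) * ((((3:ℝ)-(p:ℝ))/2)-1)
            * (1-t^2) ^ ((((3:ℝ)-(p:ℝ))/2)-1-1))) * iteratedDeriv n (u p n) t
        + cc p n * (-(2*t) * (((3:ℝ)-(p:ℝ))/2) * (1-t^2) ^ ((((3:ℝ)-(p:ℝ))/2) - 1))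
            * iteratedDeriv (n+1) (u p n) t
        + (cc p n * (-(2*t) * (((3:ℝ)-(p:ℝ))/2) * (1-t^2) ^ ((((3:ℝ)-(p:ℝ))/2) - 1))
            * iteratedDeriv (n+1) (u p n) t
          + cc p n * (1-t^2) ^ (((3:ℝ)-(p:ℝ))/2) * iteratedDeriv (n+2) (u p n) t)) t :=
    ((hf1.const_mul (cc p n)).mul (Du_hasDerivAt p n n ht)).add
      ((hw.const_mul (cc p n)).mul hv2)
  have h2 : deriv (deriv (legendreP' p n)) t
      = cc p n * ((-2 * (((3:ℝ)-(p:ℝ))/2)) * (1-t^2) ^ ((((3:ℝ)-(p:ℝ))/2)-1)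
        + (-(2*t) * (((3:ℝ)-(p:ℝ))/2)) * (-(2*t) * ((((3:ℝ)-(p:ℝ))/2)-1)
            * (1-t^2) ^ ((((3:ℝ)-(p:ℝ))/2)-1-1))) * iteratedDeriv n (u p n) t
        + cc p n * (-(2*t) * (((3:ℝ)-(p:ℝ))/2) * (1-t^2) ^ ((((3:ℝ)-(p:ℝ))/2) - 1))
            * iteratedDeriv (n+1) (u p n) t
        + (cc p n * (-(2*t) * (((3:ℝ)-(p:ℝ))/2) * (1-t^2) ^ ((((3:ℝ)-(p:ℝ))/2) - 1))
            * iteratedDeriv (n+1) (u p n) t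
          + cc p n * (1-t^2) ^ (((3:ℝ)-(p:ℝ))/2) * iteratedDeriv (n+2) (u p n) t) := by
    rw [heq.deriv_eq]; exact hP1.deriv
  have hode := rec_rel p n n t ht
  unfold rr at hode
  have hstep : ∀ y : ℝ, (1-t^2) * (1-t^2) ^ (y - 1) = (1-t^2) ^ y := fun y => by
    rw [Real.rpow_sub hpos y 1, Real.rpow_one]; field_simp
  have hA := hstep (((3:ℝ)-(p:ℝ))/2)
  have hB := hstep ((((3:ℝ)-(p:ℝ))/2) - 1)
  rw [h2, (hasDerivAt_P p n ht).deriv, legendreP'_def]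
  beta_reduce
  rw [← hA, ← hB]
  linear_combination (cc p n * ((1-t^2) * ((1-t^2)
    * (1-t^2) ^ ((((3:ℝ)-(p:ℝ))/2)-1-1)))) * hode


lemma q_ode (p n : ℕ) : ∀ t ∈ Set.Ioo (-1:ℝ) 1,
    (1 - t^2) * deriv (deriv (qf p n)) t
      = ((p:ℝ) - 1) * t * deriv (qf p n) t - ((n:ℝ) * ((n:ℝ) + (p:ℝ) - 2)) * qf p n t := by
  intro t ht
  have e1 : qf p n =ᶠ[nhds t] legendreP' p n :=
    Filter.eventuallyEq_of_mem (isOpen_Ioo.mem_nhds ht)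
      (fun s hs => (legendreP'_eq_qf p n s hs).symm)
  have e2 : deriv (qf p n) =ᶠ[nhds t] deriv (legendreP' p n) :=
    Filter.eventuallyEq_of_mem (isOpen_Ioo.mem_nhds ht)
      (fun s hs => (Filter.eventuallyEq_of_mem (isOpen_Ioo.mem_nhds hs)
        (fun y hy => (legendreP'_eq_qf p n y hy).symm)).deriv_eq)
  rw [e2.deriv_eq, e1.deriv_eq,
    show qf p n t = legendreP' p n t from (legendreP'_eq_qf p n t ht).symm]
  exact P_ode p n t ht

lemma qf_contDiff (p n : ℕ) : ContDiff ℝ ∞ (qf p n) := by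
  unfold qf
  refine contDiff_const.mul (ContDiff.sum fun j _ => contDiff_const.mul (ContDiff.mul ?_ ?_))
  · exact (contDiff_const.sub contDiff_id).pow _
  · exact (contDiff_const.add contDiff_id).pow _

lemma qf_deriv_contDiff (p n : ℕ) : ContDiff ℝ ∞ (deriv (qf p n)) :=
  (contDiff_infty_iff_deriv.mp (qf_contDiff p n)).2

lemma ff_pos (p n : ℕ) (hp : 2 ≤ p) : 0 < fallingFactorial (rr p n) n := by
  apply Finset.prod_pos
  intro i hi
  have hi' : (i : ℝ) ≤ (n : ℝ) - 1 := by
    have := Finset.mem_range.mp hi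
    have : (i:ℝ) + 1 ≤ (n:ℝ) := by exact_mod_cast this
    linarith
  have hp' : (2:ℝ) ≤ (p:ℝ) := by exact_mod_cast hp
  unfold rr
  linarith

lemma qf_one (p n : ℕ) (hp : 2 ≤ p) : qf p n 1 = 1 := by
  unfold qf
  rw [Finset.sum_eq_single n]
  · have hff := (ff_pos p n hp).ne'
    unfold aa cc
    simp only [Nat.choose_self, Nat.sub_self, ff_zero, Nat.cast_one]
    show (-1:ℝ)^n / (2^n * fallingFactorial (rr p n) n)
      * ((-1:ℝ)^n * 1 * fallingFactorial (rr p n) n * 1 * ((1-1)^(0:ℕ) * (1+1)^n)) = 1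
    field_simp
    rw [show (1:ℝ)+1 = 2 by norm_num]
    have hsq : (-1:ℝ)^n * (-1:ℝ)^n = 1 := by rw [← mul_pow]; norm_num
    linear_combination (2^n) * hsq
  · intro j hj hjn
    have h1 : n - j ≠ 0 := by
      have := Finset.mem_range.mp hj; omega
    rw [show (1:ℝ) - 1 = 0 by norm_num, zero_pow h1]
    ring
  · intro h; exact absurd (Finset.self_mem_range_succ n) h

lemma qf_neg_one (p n : ℕ) (hp : 2 ≤ p) : qf p n (-1) = (-1:ℝ)^n := by
  unfold qf
  rw [Finset.sum_eq_single 0]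
  · have hff := (ff_pos p n hp).ne'
    unfold aa cc
    simp only [Nat.choose_zero_right, Nat.sub_zero, ff_zero, Nat.cast_one, pow_zero]
    show (-1:ℝ)^n / (2^n * fallingFactorial (rr p n) n)
      * (1 * 1 * 1 * fallingFactorial (rr p n) n * ((1-(-1))^n * (1+(-1))^(0:ℕ))) = (-1:ℝ)^n
    field_simp
    norm_num
  · intro j hj hj0
    rw [show (1:ℝ) + (-1) = 0 by norm_num, zero_pow hj0]
    ring
  · intro h; exact absurd (Finset.mem_range.mpr (Nat.succ_pos n)) h

end LegAux

lemma legendreP_eq_legendreP' (p n : ℕ) : legendreP p n = LegAux.legendreP' p n := rfl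

/-- The Legendre polynomials in `p` dimensions are bounded by `1` in
absolute value on `(−1,1)`. -/
theorem legendreP_abs_le_one
    (p : ℕ) (hp : 2 ≤ p) (n : ℕ) (t : ℝ) (ht : t ∈ Set.Ioo (-1 : ℝ) 1) :
    |legendreP p n t| ≤ 1 := by
  have hqt : legendreP p n t = LegAux.qf p n t := by
    rw [legendreP_eq_legendreP']; exact LegAux.legendreP'_eq_qf p n t ht
  rw [hqt]
  by_cases hn : n = 0
  · subst hn
    simp [LegAux.qf, LegAux.cc, LegAux.aa, LegAux.ff_zero]
  · have hp' : (2:ℝ) ≤ (p:ℝ) := by exact_mod_cast hp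
    have hn1 : (1:ℝ) ≤ (n:ℝ) := by exact_mod_cast Nat.one_le_iff_ne_zero.mpr hn
    set lam : ℝ := (n:ℝ) * ((n:ℝ) + (p:ℝ) - 2) with hlam
    have hlam_pos : 0 < lam := by rw [hlam]; nlinarith
    set q : ℝ → ℝ := LegAux.qf p n with hqdef
    have hq_diff : Differentiable ℝ q :=
      (LegAux.qf_contDiff p n).differentiable (by simp)
    have hq'_diff : Differentiable ℝ (deriv q) :=
      (LegAux.qf_deriv_contDiff p n).differentiable (by simp)
    set g : ℝ → ℝ := fun s => lam * q s ^ 2 + (1 - s^2) * (deriv q s)^2 with hg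
    have hg_cont : Continuous g := by
      apply Continuous.add
      · exact continuous_const.mul (hq_diff.continuous.pow 2)
      · exact (continuous_const.sub (continuous_id.pow 2)).mul
          ((hq'_diff.continuous).pow 2)
    have hgderiv : ∀ s ∈ Set.Ioo (-1:ℝ) 1,
        HasDerivAt g (2*((p:ℝ)-2)*s*(deriv q s)^2) s := by
      intro s hs
      have h1 : HasDerivAt q (deriv q s) s := (hq_diff s).hasDerivAt
      have h2 : HasDerivAt (deriv q) (deriv (deriv q) s) s := (hq'_diff s).hasDerivAt
      have h3 := ((h1.pow 2).const_mul lam).add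
        ((LegAux.hasDerivAt_one_sub_sq s).mul (h2.pow 2))
      have hode := LegAux.q_ode p n s hs
      refine h3.congr_deriv ?_
      simp only [Pi.pow_apply, Nat.cast_ofNat, Nat.add_one_sub_one, pow_one]
      linear_combination (2 * deriv q s) * hode
    have hmono : MonotoneOn g (Set.Icc 0 1) := by
      apply monotoneOn_of_deriv_nonneg (convex_Icc 0 1) hg_cont.continuousOn
      · intro x hx
        rw [interior_Icc] at hx
        exact (hgderiv x ⟨by linarith [hx.1], hx.2⟩).differentiableAt.differentiableWithinAt
      · intro x hx
        rw [interior_Icc] at hx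
        rw [(hgderiv x ⟨by linarith [hx.1], hx.2⟩).deriv]
        exact mul_nonneg (mul_nonneg (by linarith) hx.1.le) (sq_nonneg _)
    have hanti : AntitoneOn g (Set.Icc (-1) 0) := by
      apply antitoneOn_of_deriv_nonpos (convex_Icc (-1) 0) hg_cont.continuousOn
      · intro x hx
        rw [interior_Icc] at hx
        exact (hgderiv x ⟨hx.1, by linarith [hx.2]⟩).differentiableAt.differentiableWithinAt
      · intro x hx
        rw [interior_Icc] at hx
        rw [(hgderiv x ⟨hx.1, by linarith [hx.2]⟩).deriv]
        exact mul_nonpos_of_nonpos_of_nonneg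
          (mul_nonpos_of_nonneg_of_nonpos (by linarith) hx.2.le) (sq_nonneg _)
    have g1 : g 1 = lam := by
      rw [hg]
      beta_reduce
      rw [hqdef, LegAux.qf_one p n hp]
      norm_num
    have gm1 : g (-1) = lam := by
      rw [hg]
      beta_reduce
      rw [hqdef, LegAux.qf_neg_one p n hp]
      have : ((-1:ℝ)^n)^2 = 1 := by
        rw [← pow_mul, mul_comm, pow_mul]; norm_num
      rw [this]
      norm_num
    have hgt : g t ≤ lam := by
      rcases le_total 0 t with h0 | h0
      · rw [← g1]
        exact hmono ⟨h0, ht.2.le⟩ ⟨zero_le_one, le_refl 1⟩ ht.2.le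
      · rw [← gm1]
        exact hanti ⟨le_refl (-1), by norm_num⟩ ⟨ht.1.le, h0⟩ ht.1.le
    have hpos := LegAux.one_sub_sq_pos ht
    have hqsq : q t ^ 2 ≤ 1 := by
      have hq'sq : 0 ≤ (1 - t^2) * (deriv q t)^2 :=
        mul_nonneg hpos.le (sq_nonneg _)
      have : lam * q t ^ 2 ≤ lam := by
        have : lam * q t ^ 2 + (1 - t^2) * (deriv q t)^2 ≤ lam := hgt
        linarith
      nlinarith
    have := abs_le_one_iff_mul_self_le_one.mpr (by nlinarith : q t * q t ≤ 1)
    exact this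
end
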